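/- arXiv:2404.02267 — 4 statements merged into one kernel-verified Lean document; each statement's English description precedes it below -/
import Mathlib

section
/- Let G_bip be a bipartite graph with parts X, Y of size 2z each (n = 4z). If the maximum matching M of G_bip has size |M| < z, then there exist disjoint sets L ⊆ X and R ⊆ Y with |L| ≥ z, |R| ≥ z, and no edge of G_bip between L and R. -/
/-- If the maximum matching of a bipartite graph with parts of size `2z` each has
size less than `z`, then there are sets `L` of left vertices and `R` of right
vertices, each of cardinality at least `z`, with no edge between `L` and `R`.
(A matching of size `< z` covers `< 2z` vertices.) -/
theorem stmt8 (z : ℕ) (G : SimpleGraph (Fin (2 * z) ⊕ Fin (2 * z)))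
    (hbip : ∀ a b, G.Adj a b → (a.isLeft ∧ b.isRight) ∨ (a.isRight ∧ b.isLeft))
    (M : G.Subgraph) (hM : M.IsMatching)
    (hmax : ∀ M' : G.Subgraph, M'.IsMatching → M'.verts.ncard ≤ M.verts.ncard)
    (hsmall : M.verts.ncard < 2 * z) :
    ∃ (L R : Finset (Fin (2 * z))), z ≤ L.card ∧ z ≤ R.card ∧
      ∀ x ∈ L, ∀ y ∈ R, ¬ G.Adj (Sum.inl x) (Sum.inr y) := by
  classical
  rcases Nat.eq_zero_or_pos z with hz | hz
  · subst hz; simp at hsmall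
  have hne : Nonempty (Fin (2 * z)) := ⟨⟨0, by omega⟩⟩
  set L : Finset (Fin (2 * z)) :=
    Finset.univ.filter (fun x => Sum.inl x ∉ M.verts) with hL
  set R : Finset (Fin (2 * z)) :=
    Finset.univ.filter (fun y => Sum.inr y ∉ M.verts) with hR
  set A : Finset (Fin (2 * z)) :=
    Finset.univ.filter (fun x => Sum.inl x ∈ M.verts) with hA
  set B : Finset (Fin (2 * z)) :=
    Finset.univ.filter (fun y => Sum.inr y ∈ M.verts) with hB
  -- no edge between L and R (else extend the matching)
  have hedge : ∀ x ∈ L, ∀ y ∈ R, ¬ G.Adj (Sum.inl x) (Sum.inr y) := by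
    intro x hx y hy hadj
    have hxv : Sum.inl x ∉ M.verts := (Finset.mem_filter.mp hx).2
    have hyv : Sum.inr y ∉ M.verts := (Finset.mem_filter.mp hy).2
    have hM' : (M ⊔ G.subgraphOfAdj hadj).IsMatching := by
      refine hM.sup (SimpleGraph.Subgraph.IsMatching.subgraphOfAdj hadj) ?_
      rw [hM.support_eq_verts,
        (SimpleGraph.Subgraph.IsMatching.subgraphOfAdj hadj).support_eq_verts]
      rw [Set.disjoint_right]
      intro a ha
      simp only [SimpleGraph.subgraphOfAdj_verts, Set.mem_insert_iff,
        Set.mem_singleton_iff] at ha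
      rcases ha with rfl | rfl <;> assumption
    have hle := hmax _ hM'
    have hdisj : Disjoint M.verts ({Sum.inl x, Sum.inr y} :
        Set (Fin (2 * z) ⊕ Fin (2 * z))) := by
      rw [Set.disjoint_right]
      intro a ha
      simp only [Set.mem_insert_iff, Set.mem_singleton_iff] at ha
      rcases ha with rfl | rfl <;> assumption
    have hverts : (M ⊔ G.subgraphOfAdj hadj).verts
        = M.verts ∪ {Sum.inl x, Sum.inr y} := rfl
    rw [hverts, Set.ncard_union_eq hdisj (Set.toFinite _) (Set.toFinite _),
      Set.ncard_pair (by simp)] at hle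
    omega
  -- injections between matched left and right vertices
  have keyL : ∀ x : Fin (2 * z), Sum.inl x ∈ M.verts →
      ∃ y, M.Adj (Sum.inl x) (Sum.inr y) := by
    intro x hx
    obtain ⟨w, hw, -⟩ := hM hx
    rcases hbip _ _ (M.adj_sub hw) with ⟨-, hr⟩ | ⟨hl, -⟩
    · cases w with
      | inl w => simp at hr
      | inr w => exact ⟨w, hw⟩
    · simp at hl
  have keyR : ∀ y : Fin (2 * z), Sum.inr y ∈ M.verts →
      ∃ x, M.Adj (Sum.inr y) (Sum.inl x) := by
    intro y hy
    obtain ⟨w, hw, -⟩ := hM hy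
    rcases hbip _ _ (M.adj_sub hw) with ⟨hl, -⟩ | ⟨-, hr⟩
    · simp at hl
    · cases w with
      | inl w => exact ⟨w, hw⟩
      | inr w => simp at hr
  set f : Fin (2 * z) → Fin (2 * z) := fun x =>
    if h : ∃ y, M.Adj (Sum.inl x) (Sum.inr y) then h.choose else Classical.arbitrary _
    with hf
  set g : Fin (2 * z) → Fin (2 * z) := fun y =>
    if h : ∃ x, M.Adj (Sum.inr y) (Sum.inl x) then h.choose else Classical.arbitrary _
    with hg
  have hfadj : ∀ x ∈ A, M.Adj (Sum.inl x) (Sum.inr (f x)) := by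
    intro x hx
    have h := keyL x (Finset.mem_filter.mp hx).2
    simp only [hf, dif_pos h]
    exact h.choose_spec
  have hgadj : ∀ y ∈ B, M.Adj (Sum.inr y) (Sum.inl (g y)) := by
    intro y hy
    have h := keyR y (Finset.mem_filter.mp hy).2
    simp only [hg, dif_pos h]
    exact h.choose_spec
  have hAB : A.card ≤ B.card := by
    apply Finset.card_le_card_of_injOn f
    · intro x hx
      simp only [hB, Finset.coe_filter, Finset.mem_filter, Finset.mem_univ, true_and, Set.mem_setOf_eq]
      exact M.edge_vert (M.adj_symm (hfadj x hx))
    · intro x1 h1 x2 h2 heq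
      have ha1 := M.adj_symm (hfadj x1 h1)
      have ha2 := M.adj_symm (hfadj x2 h2)
      rw [heq] at ha1
      obtain ⟨w, -, huniq⟩ := hM (M.edge_vert ha1)
      have := (huniq _ ha1).trans (huniq _ ha2).symm
      exact Sum.inl_injective this
  have hBA : B.card ≤ A.card := by
    apply Finset.card_le_card_of_injOn g
    · intro y hy
      simp only [hA, Finset.coe_filter, Finset.mem_filter, Finset.mem_univ, true_and, Set.mem_setOf_eq]
      exact M.edge_vert (M.adj_symm (hgadj y hy))
    · intro y1 h1 y2 h2 heq
      have ha1 := M.adj_symm (hgadj y1 h1)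
      have ha2 := M.adj_symm (hgadj y2 h2)
      rw [heq] at ha1
      obtain ⟨w, -, huniq⟩ := hM (M.edge_vert ha1)
      have := (huniq _ ha1).trans (huniq _ ha2).symm
      exact Sum.inr_injective this
  -- A.card + B.card ≤ ncard of matched vertices
  have hsum : A.card + B.card ≤ M.verts.ncard := by
    rw [Set.ncard_eq_toFinset_card' M.verts]
    have hdisj : Disjoint (A.map ⟨Sum.inl, Sum.inl_injective⟩)
        (B.map ⟨Sum.inr, Sum.inr_injective⟩) := by
      rw [Finset.disjoint_left]
      intro a ha hb
      simp only [Finset.mem_map, Function.Embedding.coeFn_mk] at ha hb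
      obtain ⟨x, -, rfl⟩ := ha
      obtain ⟨y, -, h⟩ := hb
      exact Sum.inl_ne_inr h.symm
    calc A.card + B.card
        = ((A.map ⟨Sum.inl, Sum.inl_injective⟩) ∪
           (B.map ⟨Sum.inr, Sum.inr_injective⟩)).card := by
          rw [Finset.card_union_of_disjoint hdisj, Finset.card_map, Finset.card_map]
      _ ≤ M.verts.toFinset.card := by
          apply Finset.card_le_card
          intro a ha
          rcases Finset.mem_union.mp ha with h | h <;>
          · simp only [Finset.mem_map, Function.Embedding.coeFn_mk] at h
            obtain ⟨x, hx, rfl⟩ := h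
            simp only [hA, hB, Finset.mem_filter] at hx
            exact Set.mem_toFinset.mpr hx.2
  have hAcard : A.card < z := by omega
  have hBcard : B.card < z := by omega
  have hLA : A.card + L.card = 2 * z := by
    have h := Finset.card_filter_add_card_filter_not
      (s := (Finset.univ : Finset (Fin (2 * z))))
      (p := fun x => Sum.inl x ∈ M.verts)
    simp only [Finset.card_univ, Fintype.card_fin] at h
    convert h using 3
  have hRB : B.card + R.card = 2 * z := by
    have h := Finset.card_filter_add_card_filter_not
      (s := (Finset.univ : Finset (Fin (2 * z))))
      (p := fun y => Sum.inr y ∈ M.verts)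
    simp only [Finset.card_univ, Fintype.card_fin] at h
    convert h using 3
  exact ⟨L, R, by omega, by omega, hedge⟩
end

section
/- Fix constants d₁ > 0 and β ≤ 1/4 and p ≥ (log n)/√n. Let G_bip be a random bipartite graph with parts X, Y of size n/2 each (n = 4z even), edges open independently with probabilities p(u,v) satisfying: for every vertex u and every set S of size ≥ βn on the opposite side, Σ_{w∈S} p(u,w) ≥ d₁ |S| p. Then P(maximum matching of G_bip has size ≥ z) ≥ 1 − 4^n exp(−d₁ n² p / 16). -/
open Finset

lemma matching_of_no_bad (z : ℕ) (hz : 0 < z) (A : Fin (2*z) → Fin (2*z) → Bool)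
    (h : ¬ ∃ f : Fin z → Fin (2*z) × Fin (2*z),
        (∀ i, A (f i).1 (f i).2 = true) ∧
        (∀ i j, i ≠ j → (f i).1 ≠ (f j).1 ∧ (f i).2 ≠ (f j).2)) :
    ∃ S T : Finset (Fin (2*z)), S.card = z ∧ T.card = z ∧
      ∀ u ∈ S, ∀ v ∈ T, A u v = false := by
  classical
  set N : Fin (2*z) → Finset (Fin (2*z)) := (fun u => univ.filter (fun v => A u v = true)) with hN
  set el : Fin (2*z) ↪ Fin (2*z) ⊕ Fin z := ⟨Sum.inl, Sum.inl_injective⟩ with hel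
  set er : Fin z ↪ Fin (2*z) ⊕ Fin z := ⟨Sum.inr, Sum.inr_injective⟩ with her
  set t : Fin (2*z) → Finset (Fin (2*z) ⊕ Fin z) :=
    (fun u => (N u).map el ∪ univ.map er) with ht
  by_cases hall : ∀ s : Finset (Fin (2*z)), s.card ≤ (s.biUnion t).card
  · exfalso
    obtain ⟨f, finj, hf⟩ := (Finset.all_card_le_biUnion_card_iff_exists_injective t).mp hall
    set L : Finset (Fin (2*z)) := univ.filter (fun u => (f u).isLeft) with hL
    have hR : (univ.filter (fun u => ¬ ((f u).isLeft : Prop))).card ≤ z := by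
      have hsub : (univ.filter (fun u => ¬ ((f u).isLeft : Prop))).image f ⊆
          (univ : Finset (Fin z)).image Sum.inr := by
        intro x hx
        simp only [mem_image, mem_filter] at hx ⊢
        obtain ⟨u, ⟨-, hu⟩, rfl⟩ := hx
        cases hfu : f u with
        | inl v => simp [hfu] at hu
        | inr j => exact ⟨j, mem_univ _, rfl⟩
      calc (univ.filter (fun u => ¬ ((f u).isLeft : Prop))).card
          = ((univ.filter (fun u => ¬ ((f u).isLeft : Prop))).image f).card :=
            (Finset.card_image_of_injective _ finj).symm
        _ ≤ ((univ : Finset (Fin z)).image Sum.inr).card := Finset.card_le_card hsub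
        _ ≤ (univ : Finset (Fin z)).card := Finset.card_image_le
        _ = z := by simp
    have hsplit : L.card + (univ.filter (fun u => ¬ ((f u).isLeft : Prop))).card = 2*z := by
      have := Finset.card_filter_add_card_filter_not
        (s := (univ : Finset (Fin (2*z)))) (p := fun u => ((f u).isLeft : Prop))
      simpa [hL] using this
    have hLcard : z ≤ L.card := by omega
    obtain ⟨B, hBL, hB⟩ := Finset.exists_subset_card_eq hLcard
    have key : ∀ u ∈ B, ∃ v, f u = Sum.inl v ∧ A u v = true := by
      intro u huB
      have huL : ((f u).isLeft : Prop) := (mem_filter.mp (hBL huB)).2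
      have := hf u
      rw [ht] at this
      rcases mem_union.mp this with hl | hr
      · obtain ⟨v, hv, hev⟩ := mem_map.mp hl
        exact ⟨v, hev.symm, (mem_filter.mp hv).2⟩
      · obtain ⟨j, -, hej⟩ := mem_map.mp hr
        rw [← hej] at huL; simp [her] at huL
    choose v hv1 hv2 using key
    set b : Fin z ≃o {x // x ∈ B} := B.orderIsoOfFin hB with hb
    refine h ⟨fun i => ((b i : Fin (2*z)), v (b i) (b i).2), fun i => ?_, fun i j hij => ?_⟩
    · exact hv2 _ _
    · constructor
      · intro hcontra
        exact hij (b.injective (Subtype.ext hcontra))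
      · intro hcontra
        apply hij
        apply b.injective
        apply Subtype.ext
        apply finj
        rw [hv1 (b i) (b i).2, hv1 (b j) (b j).2]
        exact congrArg Sum.inl hcontra
  · push_neg at hall
    obtain ⟨s, hs⟩ := hall
    have hs0 : s.Nonempty := Finset.card_pos.mp (lt_of_le_of_lt (Nat.zero_le _) hs)
    obtain ⟨u0, hu0⟩ := hs0
    have hsub : (s.biUnion N).map el ∪ univ.map er ⊆ s.biUnion t := by
      intro x hx
      rcases mem_union.mp hx with hl | hr
      · obtain ⟨w, hw, hew⟩ := mem_map.mp hl
        obtain ⟨u, hu, hwu⟩ := mem_biUnion.mp hw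
        refine mem_biUnion.mpr ⟨u, hu, ?_⟩
        show x ∈ (N u).map el ∪ univ.map er
        exact mem_union_left _ (mem_map.mpr ⟨w, hwu, hew⟩)
      · refine mem_biUnion.mpr ⟨u0, hu0, ?_⟩
        show x ∈ (N u0).map el ∪ univ.map er
        exact mem_union_right _ hr
    have hdisj : Disjoint ((s.biUnion N).map el) ((univ : Finset (Fin z)).map er) := by
      rw [Finset.disjoint_left]
      intro x hxl hxr
      obtain ⟨w, -, hew⟩ := mem_map.mp hxl
      obtain ⟨j, -, hej⟩ := mem_map.mp hxr
      rw [← hew] at hej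
      simp [hel, her] at hej
    have hcard : (s.biUnion N).card + z ≤ (s.biUnion t).card := by
      have := Finset.card_le_card hsub
      rwa [Finset.card_union_of_disjoint hdisj, Finset.card_map, Finset.card_map,
        Finset.card_univ, Fintype.card_fin] at this
    have hscard : s.card ≤ 2*z := by
      simpa using Finset.card_le_card (Finset.subset_univ s)
    have hNcard : (s.biUnion N).card + z < s.card := lt_of_le_of_lt hcard hs
    obtain ⟨S, hSs, hScard⟩ := Finset.exists_subset_card_eq (show z ≤ s.card by omega)
    have hTbig : z ≤ (univ \ s.biUnion N).card := by
      rw [Finset.card_sdiff_of_subset (Finset.subset_univ _), Finset.card_univ, Fintype.card_fin]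
      omega
    obtain ⟨T, hTs, hTcard⟩ := Finset.exists_subset_card_eq hTbig
    refine ⟨S, T, hScard, hTcard, fun u hu w hw => ?_⟩
    cases hA : A u w with
    | false => rfl
    | true =>
      exfalso
      have hwmem : w ∈ s.biUnion N :=
        mem_biUnion.mpr ⟨u, hSs hu, by rw [hN]; exact mem_filter.mpr ⟨mem_univ _, hA⟩⟩
      have := hTs hw
      rw [Finset.mem_sdiff] at this
      exact this.2 hwmem

open MeasureTheory ProbabilityTheory
open scoped ENNReal

/-- With the first niceness condition (constants `β ≤ 1/4`, `d₁ > 0`,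
`p ≥ log n / √n`, `n = 4z`), the random bipartite graph with parts of size `2z`
has a matching of size at least `z` (i.e. `z` pairwise vertex-disjoint open
edges) with probability at least `1 - 4^n exp (-d₁ n² p / 16)`. -/
theorem stmt9 {Ω : Type*} [MeasurableSpace Ω] (μ : Measure Ω) [IsProbabilityMeasure μ]
    (z : ℕ) (hz : 0 < z) (n : ℕ) (hn : n = 4 * z)
    (β d₁ p : ℝ) (hβ0 : 0 < β) (hβ : β ≤ 1 / 4) (hd₁ : 0 < d₁)
    (hp0 : 0 < p) (hp1 : p < 1) (hplog : Real.log n / Real.sqrt n ≤ p)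
    (pr : Fin (2 * z) → Fin (2 * z) → ℝ)
    (hpr0 : ∀ u v, 0 ≤ pr u v) (hpr1 : ∀ u v, pr u v ≤ 1)
    (X : Fin (2 * z) × Fin (2 * z) → Ω → Bool)
    (hXmeas : ∀ e, Measurable (X e))
    (hindep : iIndepFun X μ)
    (hdist : ∀ u v, μ {ω | X (u, v) ω = true} = ENNReal.ofReal (pr u v))
    (hniceL : ∀ (u : Fin (2 * z)) (S : Finset (Fin (2 * z))), β * n ≤ S.card →
      d₁ * S.card * p ≤ ∑ w ∈ S, pr u w)
    (hniceR : ∀ (v : Fin (2 * z)) (S : Finset (Fin (2 * z))), β * n ≤ S.card →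
      d₁ * S.card * p ≤ ∑ w ∈ S, pr w v) :
    ENNReal.ofReal (1 - 4 ^ n * Real.exp (-(d₁ * (n : ℝ) ^ 2 * p / 16))) ≤
      μ {ω | ∃ f : Fin z → Fin (2 * z) × Fin (2 * z),
        (∀ i, X (f i) ω = true) ∧
        (∀ i j, i ≠ j → (f i).1 ≠ (f j).1 ∧ (f i).2 ≠ (f j).2)} := by
  classical
  have hn2 : (n : ℝ) = 4 * z := by rw [hn]; push_cast; ring
  set c : ℝ := d₁ * (n : ℝ) ^ 2 * p / 16 with hc
  -- measure of a closed edge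
  have hclosed : ∀ e : Fin (2 * z) × Fin (2 * z),
      μ (X e ⁻¹' {false}) = ENNReal.ofReal (1 - pr e.1 e.2) := by
    intro e
    have h2 : X e ⁻¹' {false} = (X e ⁻¹' {true})ᶜ := by
      ext ω
      simp only [Set.mem_preimage, Set.mem_singleton_iff, Set.mem_compl_iff]
      exact Bool.eq_false_iff
    have h1 : X e ⁻¹' {true} = {ω | X (e.1, e.2) ω = true} := by
      ext ω; simp
    rw [h2, prob_compl_eq_one_sub ((hXmeas e) (measurableSet_singleton true)), h1,
      hdist e.1 e.2, ENNReal.ofReal_sub _ (hpr0 _ _), ENNReal.ofReal_one]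
  set E : Finset (Fin (2 * z)) → Finset (Fin (2 * z)) → Set Ω :=
    fun S T => ⋂ e ∈ S ×ˢ T, X e ⁻¹' {false} with hE
  have hEmeas : ∀ S T, MeasurableSet (E S T) := fun S T =>
    MeasurableSet.biInter (Set.to_countable _)
      (fun e _ => (hXmeas e) (measurableSet_singleton false))
  have hEbound : ∀ S T : Finset (Fin (2 * z)), S.card = z → T.card = z →
      μ (E S T) ≤ ENNReal.ofReal (Real.exp (-c)) := by
    intro S T hS hT
    have hmul := hindep.measure_inter_preimage_eq_mul (S ×ˢ T)
      (sets := fun _ => ({false} : Set Bool)) (fun _ _ => measurableSet_singleton _)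
    have hprod : μ (E S T) = ENNReal.ofReal (∏ e ∈ S ×ˢ T, (1 - pr e.1 e.2)) := by
      rw [hE, hmul, ENNReal.ofReal_prod_of_nonneg (fun e _ => by linarith [hpr1 e.1 e.2])]
      exact Finset.prod_congr rfl (fun e _ => hclosed e)
    rw [hprod]
    apply ENNReal.ofReal_le_ofReal
    have hsum : c ≤ ∑ e ∈ S ×ˢ T, pr e.1 e.2 := by
      rw [Finset.sum_product]
      have hT' : β * (n : ℝ) ≤ (T.card : ℝ) := by
        rw [hT, hn2]
        have : (0:ℝ) ≤ (z:ℝ) := Nat.cast_nonneg z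
        nlinarith
      have each : ∀ u ∈ S, d₁ * z * p ≤ ∑ v ∈ T, pr u v := by
        intro u _
        have := hniceL u T hT'
        rwa [hT] at this
      calc c = S.card • (d₁ * z * p) := by
            rw [hS, nsmul_eq_mul, hc, hn2]; ring
        _ ≤ ∑ u ∈ S, ∑ v ∈ T, pr u v := Finset.card_nsmul_le_sum S _ _ each
    calc ∏ e ∈ S ×ˢ T, (1 - pr e.1 e.2)
        ≤ ∏ e ∈ S ×ˢ T, Real.exp (-(pr e.1 e.2)) :=
          Finset.prod_le_prod (fun e _ => by linarith [hpr1 e.1 e.2])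
            (fun e _ => by linarith [Real.add_one_le_exp (-(pr e.1 e.2))])
      _ = Real.exp (∑ e ∈ S ×ˢ T, -(pr e.1 e.2)) := (Real.exp_sum _ _).symm
      _ ≤ Real.exp (-c) := by
          apply Real.exp_le_exp.mpr
          rw [Finset.sum_neg_distrib]
          linarith
  set pc : Finset (Finset (Fin (2 * z))) :=
    Finset.powersetCard z (Finset.univ : Finset (Fin (2 * z))) with hpc
  set U : Set Ω := ⋃ S ∈ pc, ⋃ T ∈ pc, E S T with hU
  have hUmeas : MeasurableSet U :=
    MeasurableSet.biUnion (Set.to_countable _) (fun S _ =>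
      MeasurableSet.biUnion (Set.to_countable _) (fun T _ => hEmeas S T))
  have hpccard : pc.card ≤ 2 ^ (2 * z) := by
    rw [hpc, Finset.powersetCard_eq_filter]
    exact le_trans (Finset.card_filter_le _ _) (by simp [Finset.card_powerset])
  have hUbound : μ U ≤ ENNReal.ofReal ((4:ℝ) ^ n * Real.exp (-c)) := by
    have step1 : μ U ≤ ∑ S ∈ pc, ∑ T ∈ pc, μ (E S T) := by
      refine le_trans (measure_biUnion_finset_le _ _) ?_
      exact Finset.sum_le_sum (fun S _ => measure_biUnion_finset_le _ _)
    have step2 : ∑ S ∈ pc, ∑ T ∈ pc, μ (E S T)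
        ≤ ∑ _S ∈ pc, ∑ _T ∈ pc, ENNReal.ofReal (Real.exp (-c)) := by
      refine Finset.sum_le_sum (fun S hS => Finset.sum_le_sum (fun T hT => ?_))
      exact hEbound S T (Finset.mem_powersetCard.mp hS).2 (Finset.mem_powersetCard.mp hT).2
    have step3 : ∑ _S ∈ pc, ∑ _T ∈ pc, ENNReal.ofReal (Real.exp (-c))
        = ((pc.card * pc.card : ℕ) : ℝ≥0∞) * ENNReal.ofReal (Real.exp (-c)) := by
      simp only [Finset.sum_const, smul_smul, nsmul_eq_mul, Nat.cast_mul]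
      rw [mul_assoc]
    have hcount : ((pc.card * pc.card : ℕ) : ℝ) ≤ (4:ℝ) ^ n := by
      have h1 : pc.card * pc.card ≤ 4 ^ n := by
        calc pc.card * pc.card ≤ 2 ^ (2*z) * 2 ^ (2*z) := Nat.mul_le_mul hpccard hpccard
          _ = 4 ^ (2*z) := by rw [← pow_add]; rw [show (4:ℕ) = 2^2 by norm_num, ← pow_mul]; ring_nf
          _ ≤ 4 ^ n := Nat.pow_le_pow_right (by norm_num) (by omega)
      calc ((pc.card * pc.card : ℕ) : ℝ) ≤ ((4 ^ n : ℕ) : ℝ) := Nat.cast_le.mpr h1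
        _ = (4:ℝ) ^ n := by push_cast; ring
    calc μ U ≤ ((pc.card * pc.card : ℕ) : ℝ≥0∞) * ENNReal.ofReal (Real.exp (-c)) := by
          rw [← step3]; exact le_trans step1 step2
      _ = ENNReal.ofReal (((pc.card * pc.card : ℕ) : ℝ) * Real.exp (-c)) := by
          rw [ENNReal.ofReal_mul (Nat.cast_nonneg _), ENNReal.ofReal_natCast]
      _ ≤ ENNReal.ofReal ((4:ℝ) ^ n * Real.exp (-c)) := by
          apply ENNReal.ofReal_le_ofReal
          exact mul_le_mul_of_nonneg_right hcount (Real.exp_nonneg _)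
  have hcompl : Uᶜ ⊆ {ω | ∃ f : Fin z → Fin (2 * z) × Fin (2 * z),
      (∀ i, X (f i) ω = true) ∧
      (∀ i j, i ≠ j → (f i).1 ≠ (f j).1 ∧ (f i).2 ≠ (f j).2)} := by
    intro ω hω
    by_contra hno
    obtain ⟨S, T, hS, hT, hall0⟩ := matching_of_no_bad z hz (fun u v => X (u, v) ω)
      (by simpa using hno)
    apply hω
    rw [hU]
    refine Set.mem_iUnion₂.mpr ⟨S, Finset.mem_powersetCard.mpr ⟨Finset.subset_univ _, hS⟩, ?_⟩
    refine Set.mem_iUnion₂.mpr ⟨T, Finset.mem_powersetCard.mpr ⟨Finset.subset_univ _, hT⟩, ?_⟩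
    rw [hE]
    refine Set.mem_iInter₂.mpr (fun e he => ?_)
    have hmem := Finset.mem_product.mp he
    have := hall0 e.1 hmem.1 e.2 hmem.2
    simp only [Set.mem_preimage, Set.mem_singleton_iff]
    simpa using this
  calc ENNReal.ofReal (1 - 4 ^ n * Real.exp (-(d₁ * (n : ℝ) ^ 2 * p / 16)))
      = 1 - ENNReal.ofReal ((4:ℝ) ^ n * Real.exp (-c)) := by
        rw [ENNReal.ofReal_sub _ (by positivity), ENNReal.ofReal_one]
    _ ≤ 1 - μ U := tsub_le_tsub_left hUbound 1
    _ = μ Uᶜ := (prob_compl_eq_one_sub hUmeas).symm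
    _ ≤ _ := measure_mono hcompl
end

section
/- Let {p(u,v)} be a (β, d₁, d₂, p)-nice probability assignment on K_n with β ≤ 1/4 and p ≥ (log n)/√n, and let G be the corresponding inhomogeneous random graph where each edge {u,v} is open independently with probability p(u,v). Then there exists a constant D > 0 (independent of n) such that for all sufficiently large n, the probability that G contains a perfect matching (a matching covering all vertices except at most one) is at least 1 − exp(−D (log n)²). -/
open MeasureTheory ProbabilityTheory

section PMAux
open Finset

lemma cardA (n m : ℕ) (h : m ≤ n) :
    ((Finset.univ : Finset (Fin n)).filter (fun v : Fin n => (v : ℕ) < m)).card = m := by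
  have : ((Finset.univ : Finset (Fin n)).filter (fun v : Fin n => (v : ℕ) < m)).card
      = (Finset.range m).card := by
    apply Finset.card_bij' (fun (a : Fin n) _ => (a : ℕ))
      (fun k hk => (⟨k, lt_of_lt_of_le (Finset.mem_range.mp hk) h⟩ : Fin n))
    case hi => intro a ha; simp only [Finset.mem_filter] at ha; exact Finset.mem_range.mpr ha.2
    case hj =>
      intro a ha; simp only [Finset.mem_filter, Finset.mem_univ, true_and]
      exact Finset.mem_range.mp ha
    case left_inv => intro a ha; rfl
    case right_inv => intro a ha; rfl
  simpa using this

lemma cardB (n m : ℕ) (h : 2 * m ≤ n) :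
    ((Finset.univ : Finset (Fin n)).filter
      (fun v : Fin n => m ≤ (v : ℕ) ∧ (v : ℕ) < 2 * m)).card = m := by
  have : ((Finset.univ : Finset (Fin n)).filter
      (fun v : Fin n => m ≤ (v : ℕ) ∧ (v : ℕ) < 2 * m)).card = (Finset.range m).card := by
    apply Finset.card_bij' (fun (a : Fin n) _ => (a : ℕ) - m)
      (fun k hk => (⟨m + k, by have := Finset.mem_range.mp hk; omega⟩ : Fin n))
    case hi =>
      intro a ha; simp only [Finset.mem_filter] at ha; exact Finset.mem_range.mpr (by omega)
    case hj =>
      intro a ha; have := Finset.mem_range.mp ha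
      simp only [Finset.mem_filter, Finset.mem_univ, true_and]; omega
    case left_inv => intro a ha; simp only [Finset.mem_filter] at ha; apply Fin.ext; simp; omega
    case right_inv => intro a ha; simp
  simpa using this

lemma bad_prob {Ω : Type} [MeasurableSpace Ω] (μ : Measure Ω) [IsProbabilityMeasure μ]
    {n : ℕ} (pr : Fin n → Fin n → ℝ) (X : Sym2 (Fin n) → Ω → Bool)
    (hsymm : ∀ u v, pr u v = pr v u) (hnn : ∀ u v, 0 ≤ pr u v)
    (hmeas : ∀ e, Measurable (X e))
    (hind : iIndepFun X μ)
    (hprob : ∀ u v, μ {ω | X s(u, v) ω = true} = ENNReal.ofReal (pr u v))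
    (S T : Finset (Fin n)) (hd : Disjoint S T) :
    μ {ω | ∀ u ∈ S, ∀ w ∈ T, X s(u, w) ω = false}
      ≤ ENNReal.ofReal (Real.exp (-(∑ u ∈ S, ∑ w ∈ T, pr u w))) := by
  classical
  set prf : Sym2 (Fin n) → ℝ := Sym2.lift ⟨pr, hsymm⟩ with hprf
  set E : Finset (Sym2 (Fin n)) := (S ×ˢ T).image (fun q => s(q.1, q.2)) with hE
  have hinj : Set.InjOn (fun q : Fin n × Fin n => s(q.1, q.2)) (S ×ˢ T) := by
    intro q hq q' hq' he
    simp only [coe_product, Set.mem_prod] at hq hq'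
    rcases Sym2.eq_iff.mp he with ⟨h1, h2⟩ | ⟨h1, h2⟩
    · exact Prod.ext h1 h2
    · exact absurd hq'.2 (fun hc => Finset.disjoint_left.mp hd hq.1 (h1 ▸ hc))
  have hset : {ω | ∀ u ∈ S, ∀ w ∈ T, X s(u, w) ω = false}
      = ⋂ e ∈ E, X e ⁻¹' {false} := by
    ext ω
    simp only [Set.mem_setOf_eq, Set.mem_iInter, hE, Finset.mem_image, Set.mem_preimage,
      Set.mem_singleton_iff, Finset.mem_product, Prod.exists]
    constructor
    · rintro h e ⟨u, w, ⟨hu, hw⟩, rfl⟩; exact h u hu w hw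
    · intro h u hu w hw; exact h s(u, w) ⟨u, w, ⟨hu, hw⟩, rfl⟩
  have hmu : μ (⋂ e ∈ E, X e ⁻¹' {false}) = ∏ e ∈ E, μ (X e ⁻¹' {false}) :=
    hind.meas_biInter (fun e _ => ⟨{false}, measurableSet_singleton false, rfl⟩)
  have hfac : ∀ e ∈ E, μ (X e ⁻¹' {false}) ≤ ENNReal.ofReal (Real.exp (-(prf e))) := by
    intro e he
    obtain ⟨q, hq, rfl⟩ := Finset.mem_image.mp he
    have h1 : X s(q.1, q.2) ⁻¹' {false} = {ω | X s(q.1, q.2) ω = true}ᶜ := by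
      ext ω
      simp only [Set.mem_preimage, Set.mem_singleton_iff, Set.mem_compl_iff, Set.mem_setOf_eq,
        Bool.not_eq_true]
    have h2 : MeasurableSet {ω | X s(q.1, q.2) ω = true} :=
      hmeas _ (measurableSet_singleton true)
    rw [h1, prob_compl_eq_one_sub h2, hprob q.1 q.2]
    have hlift : prf s(q.1, q.2) = pr q.1 q.2 := rfl
    rw [hlift]
    have : (1 : ENNReal) - ENNReal.ofReal (pr q.1 q.2)
        = ENNReal.ofReal (1 - pr q.1 q.2) := by
      rw [ENNReal.ofReal_sub _ (hnn q.1 q.2), ENNReal.ofReal_one]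
    rw [this]
    apply ENNReal.ofReal_le_ofReal
    have := Real.add_one_le_exp (-(pr q.1 q.2))
    linarith
  calc μ {ω | ∀ u ∈ S, ∀ w ∈ T, X s(u, w) ω = false}
      = ∏ e ∈ E, μ (X e ⁻¹' {false}) := by rw [hset, hmu]
    _ ≤ ∏ e ∈ E, ENNReal.ofReal (Real.exp (-(prf e))) := Finset.prod_le_prod' hfac
    _ = ENNReal.ofReal (∏ e ∈ E, Real.exp (-(prf e))) :=
        (ENNReal.ofReal_prod_of_nonneg (fun e _ => (Real.exp_pos _).le)).symm
    _ = ENNReal.ofReal (Real.exp (∑ e ∈ E, -(prf e))) := by rw [Real.exp_sum]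
    _ = ENNReal.ofReal (Real.exp (-(∑ u ∈ S, ∑ w ∈ T, pr u w))) := by
        rw [← Finset.sum_neg_distrib]
        congr 2
        rw [hE, Finset.sum_image (fun q hq q' hq' h => hinj (by simpa using hq) (by simpa using hq') h)]
        rw [Finset.sum_product]
        simp [hprf]

lemma count_bound (m s : ℕ) (h1 : 1 ≤ s) (h2 : s ≤ m) :
    m.choose s * m.choose (m + 1 - s) ≤ m ^ (2 * min s (m + 1 - s)) := by
  have hm : 1 ≤ m := le_trans h1 h2
  rcases le_total s (m + 1 - s) with h | h
  · have hk : min s (m + 1 - s) = s := min_eq_left h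
    have c1 : m.choose s ≤ m ^ s := Nat.choose_le_pow m s
    have c2 : m.choose (m + 1 - s) ≤ m ^ (s - 1) := by
      have e1 : m - (m + 1 - s) = s - 1 := by omega
      have e2 : m.choose (m + 1 - s) = m.choose (s - 1) := by
        rw [← e1, Nat.choose_symm (by omega)]
      rw [e2]; exact Nat.choose_le_pow m (s - 1)
    calc m.choose s * m.choose (m + 1 - s) ≤ m ^ s * m ^ (s - 1) :=
          Nat.mul_le_mul c1 c2
      _ = m ^ (s + (s - 1)) := (pow_add m s (s - 1)).symm
      _ ≤ m ^ (2 * min s (m + 1 - s)) := Nat.pow_le_pow_right hm (by omega)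
  · have hk : min s (m + 1 - s) = m + 1 - s := min_eq_right h
    have c1 : m.choose s ≤ m ^ (m + 1 - s - 1) := by
      have e1 : m - s = m + 1 - s - 1 := by omega
      have e2 : m.choose s = m.choose (m + 1 - s - 1) := by
        rw [← e1, Nat.choose_symm h2]
      rw [e2]; exact Nat.choose_le_pow m _
    have c2 : m.choose (m + 1 - s) ≤ m ^ (m + 1 - s) := Nat.choose_le_pow m _
    calc m.choose s * m.choose (m + 1 - s) ≤ m ^ (m + 1 - s - 1) * m ^ (m + 1 - s) :=
          Nat.mul_le_mul c1 c2
      _ = m ^ ((m + 1 - s - 1) + (m + 1 - s)) := (pow_add m _ _).symm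
      _ ≤ m ^ (2 * min s (m + 1 - s)) := Nat.pow_le_pow_right hm (by omega)

lemma union_sum (m : ℕ) (Λ L : ℝ) (hm : 1 ≤ m) (hL : 0 ≤ L)
    (hΛ : 3 * Real.log m + L ≤ Λ) :
    ∑ s ∈ Finset.Icc 1 m,
      ((m.choose s : ℝ) * (m.choose (m + 1 - s) : ℝ)
        * Real.exp (-((min s (m + 1 - s) : ℕ) : ℝ) * Λ)) ≤ Real.exp (-L) := by
  have hmR : (1 : ℝ) ≤ (m : ℝ) := by exact_mod_cast hm
  have hlogm : 0 ≤ Real.log m := Real.log_nonneg hmR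
  have key : ∀ s ∈ Finset.Icc 1 m,
      (m.choose s : ℝ) * (m.choose (m + 1 - s) : ℝ)
        * Real.exp (-((min s (m + 1 - s) : ℕ) : ℝ) * Λ)
      ≤ Real.exp (-(Real.log m + L)) := by
    intro s hs
    rw [Finset.mem_Icc] at hs
    set k : ℕ := min s (m + 1 - s) with hkdef
    have hk1 : 1 ≤ k := by omega
    have hcc : (m.choose s : ℝ) * (m.choose (m + 1 - s) : ℝ) ≤ (m : ℝ) ^ (2 * k) := by
      have := count_bound m s hs.1 hs.2
      calc (m.choose s : ℝ) * (m.choose (m + 1 - s) : ℝ)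
          = ((m.choose s * m.choose (m + 1 - s) : ℕ) : ℝ) := by push_cast; ring
        _ ≤ (((m : ℕ) ^ (2 * k) : ℕ) : ℝ) := by exact_mod_cast this
        _ = (m : ℝ) ^ (2 * k) := by push_cast; ring
    have hpow : (m : ℝ) ^ (2 * k) = Real.exp ((2 * k : ℕ) * Real.log m) := by
      rw [← Real.rpow_natCast (m:ℝ) (2*k), Real.rpow_def_of_pos (by positivity : (0:ℝ) < (m:ℝ))]
      ring_nf
    calc (m.choose s : ℝ) * (m.choose (m + 1 - s) : ℝ)
          * Real.exp (-((k : ℕ) : ℝ) * Λ)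
        ≤ (m : ℝ) ^ (2 * k) * Real.exp (-(k : ℝ) * Λ) := by
          apply mul_le_mul_of_nonneg_right hcc (Real.exp_pos _).le
      _ = Real.exp ((2 * k : ℕ) * Real.log m - (k : ℝ) * Λ) := by
          rw [hpow, ← Real.exp_add]; ring_nf
      _ ≤ Real.exp (-(Real.log m + L)) := by
          apply Real.exp_le_exp.mpr
          have hkR : (1 : ℝ) ≤ (k : ℝ) := by exact_mod_cast hk1
          have h2k : ((2 * k : ℕ) : ℝ) = 2 * (k : ℝ) := by push_cast; ring
          rw [h2k]
          nlinarith [hkR, hΛ, hlogm, hL]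
  calc ∑ s ∈ Finset.Icc 1 m, ((m.choose s : ℝ) * (m.choose (m + 1 - s) : ℝ)
        * Real.exp (-((min s (m + 1 - s) : ℕ) : ℝ) * Λ))
      ≤ ∑ s ∈ Finset.Icc 1 m, Real.exp (-(Real.log m + L)) := Finset.sum_le_sum key
    _ = (m : ℝ) * Real.exp (-(Real.log m + L)) := by
        rw [Finset.sum_const, Nat.card_Icc]; simp [nsmul_eq_mul]
    _ = Real.exp (Real.log m) * Real.exp (-(Real.log m + L)) := by
        rw [Real.exp_log (by positivity : (0:ℝ) < (m:ℝ))]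
    _ = Real.exp (-L) := by rw [← Real.exp_add]; ring_nf

lemma row_sum {n : ℕ} {β d₁ pn : ℝ} {pr : Fin n → Fin n → ℝ}
    (hnn : ∀ u v, 0 ≤ pr u v)
    (hnice : ∀ (u v : Fin n) (S₁ S₂ : Finset (Fin n)), Disjoint S₁ S₂ →
      u ∉ S₁ → u ∉ S₂ → v ∉ S₁ → v ∉ S₂ → S₁.card = S₂.card →
      β * n ≤ S₁.card → d₁ * S₁.card * pn ≤ ∑ w ∈ S₁, pr u w)
    (hβ : β * n ≤ (Nat.ceil (β * (n : ℝ)) : ℝ))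
    (hn : 2 * Nat.ceil (β * (n : ℝ)) + 1 ≤ n)
    (u : Fin n) (T : Finset (Fin n)) (hu : u ∉ T)
    (hT : Nat.ceil (β * (n : ℝ)) ≤ T.card) :
    d₁ * (Nat.ceil (β * (n : ℝ)) : ℝ) * pn ≤ ∑ w ∈ T, pr u w := by
  classical
  set r₀ : ℕ := Nat.ceil (β * (n : ℝ)) with hr₀
  obtain ⟨T₁, hT₁sub, hT₁card⟩ := Finset.exists_subset_card_eq hT
  have huT₁ : u ∉ T₁ := fun h => hu (hT₁sub h)
  have hRcard : r₀ ≤ ((Finset.univ : Finset (Fin n)) \ insert u T₁).card := by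
    rw [Finset.card_sdiff_of_subset (Finset.subset_univ _), Finset.card_insert_of_notMem huT₁,
      Finset.card_univ, Fintype.card_fin, hT₁card]
    omega
  obtain ⟨S₂, hS₂sub, hS₂card⟩ := Finset.exists_subset_card_eq hRcard
  have hdisj : Disjoint T₁ S₂ := by
    rw [Finset.disjoint_right]
    intro x hx hxT₁
    have := hS₂sub hx
    rw [Finset.mem_sdiff] at this
    exact this.2 (Finset.mem_insert_of_mem hxT₁)
  have huS₂ : u ∉ S₂ := by
    intro hx
    have := hS₂sub hx
    rw [Finset.mem_sdiff] at this
    exact this.2 (Finset.mem_insert_self u T₁)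
  have hmain := hnice u u T₁ S₂ hdisj huT₁ huS₂ huT₁ huS₂
    (by rw [hT₁card, hS₂card]) (by rw [hT₁card]; exact hβ)
  rw [hT₁card] at hmain
  refine le_trans hmain (Finset.sum_le_sum_of_subset_of_nonneg hT₁sub ?_)
  intro w _ _; exact hnn u w

lemma pair_lower {n : ℕ} {β d₁ pn : ℝ} {pr : Fin n → Fin n → ℝ}
    (hsymm : ∀ u v, pr u v = pr v u)
    (hnn : ∀ u v, 0 ≤ pr u v) (hd₁ : 0 ≤ d₁) (hpn : 0 ≤ pn)
    (hnice : ∀ (u v : Fin n) (S₁ S₂ : Finset (Fin n)), Disjoint S₁ S₂ →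
      u ∉ S₁ → u ∉ S₂ → v ∉ S₁ → v ∉ S₂ → S₁.card = S₂.card →
      β * n ≤ S₁.card → d₁ * S₁.card * pn ≤ ∑ w ∈ S₁, pr u w)
    (hβ : β * n ≤ (Nat.ceil (β * (n : ℝ)) : ℝ))
    (hn : 2 * Nat.ceil (β * (n : ℝ)) + 1 ≤ n)
    (S T : Finset (Fin n)) (hdisj : Disjoint S T)
    (hmax : Nat.ceil (β * (n : ℝ)) ≤ T.card ∨ Nat.ceil (β * (n : ℝ)) ≤ S.card) :
    ((min S.card T.card : ℕ) : ℝ) * (d₁ * (Nat.ceil (β * (n : ℝ)) : ℝ) * pn)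
      ≤ ∑ u ∈ S, ∑ w ∈ T, pr u w := by
  classical
  set r₀ : ℕ := Nat.ceil (β * (n : ℝ)) with hr₀
  set Λ : ℝ := d₁ * (r₀ : ℝ) * pn with hΛ
  have hΛnn : 0 ≤ Λ := by positivity
  rcases hmax with hT | hS
  · -- rows
    have hrows : (S.card : ℝ) * Λ ≤ ∑ u ∈ S, ∑ w ∈ T, pr u w := by
      have : ∀ u ∈ S, Λ ≤ ∑ w ∈ T, pr u w := by
        intro u hu
        exact row_sum hnn hnice hβ hn u T
          (fun h => Finset.disjoint_left.mp hdisj hu h) hT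
      calc (S.card : ℝ) * Λ = S.card • Λ := by rw [nsmul_eq_mul]
        _ ≤ ∑ u ∈ S, ∑ w ∈ T, pr u w := Finset.card_nsmul_le_sum S _ Λ this
    refine le_trans ?_ hrows
    apply mul_le_mul_of_nonneg_right _ hΛnn
    exact_mod_cast Nat.cast_le.mpr (min_le_left _ _)
  · -- columns
    have hswap : ∑ u ∈ S, ∑ w ∈ T, pr u w = ∑ w ∈ T, ∑ u ∈ S, pr w u := by
      rw [Finset.sum_comm]
      apply Finset.sum_congr rfl; intro w _
      apply Finset.sum_congr rfl; intro u _
      exact hsymm u w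
    have hrows : (T.card : ℝ) * Λ ≤ ∑ w ∈ T, ∑ u ∈ S, pr w u := by
      have : ∀ w ∈ T, Λ ≤ ∑ u ∈ S, pr w u := by
        intro w hw
        exact row_sum hnn hnice hβ hn w S
          (fun h => Finset.disjoint_right.mp hdisj hw h) hS
      calc (T.card : ℝ) * Λ = T.card • Λ := by rw [nsmul_eq_mul]
        _ ≤ _ := Finset.card_nsmul_le_sum T _ Λ this
    rw [hswap]
    refine le_trans ?_ hrows
    apply mul_le_mul_of_nonneg_right _ hΛnn
    exact_mod_cast Nat.cast_le.mpr (min_le_right _ _)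

def setA (n m : ℕ) : Finset (Fin n) :=
  Finset.univ.filter (fun v : Fin n => (v : ℕ) < m)

def setB (n m : ℕ) : Finset (Fin n) :=
  Finset.univ.filter (fun v : Fin n => m ≤ (v : ℕ) ∧ (v : ℕ) < 2 * m)

lemma cardA' (n m : ℕ) (h : m ≤ n) : (setA n m).card = m := cardA n m h
lemma cardB' (n m : ℕ) (h : 2 * m ≤ n) : (setB n m).card = m := cardB n m h

lemma mem_setA {n m : ℕ} {v : Fin n} : v ∈ setA n m ↔ (v : ℕ) < m := by
  simp [setA]

lemma mem_setB {n m : ℕ} {v : Fin n} : v ∈ setB n m ↔ m ≤ (v : ℕ) ∧ (v : ℕ) < 2 * m := by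
  simp [setB]

lemma matching_det {n m : ℕ} (hm2 : 2 * m ≤ n) (hn2m : n ≤ 2 * m + 1)
    (g : Fin n → Fin n → Bool)
    (hGd : ∀ S T : Finset (Fin n), S ⊆ setA n m → T ⊆ setB n m → S.Nonempty →
      S.card + T.card = m + 1 → ∃ u ∈ S, ∃ w ∈ T, g u w = true) :
    ∃ M : Finset (Fin n × Fin n),
      (∀ e ∈ M, e.1 ≠ e.2 ∧ g e.1 e.2 = true) ∧
      (∀ e ∈ M, ∀ e' ∈ M, e ≠ e' →
        e.1 ≠ e'.1 ∧ e.1 ≠ e'.2 ∧ e.2 ≠ e'.1 ∧ e.2 ≠ e'.2) ∧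
      (∀ v w : Fin n, (∀ e ∈ M, e.1 ≠ v ∧ e.2 ≠ v) →
        (∀ e ∈ M, e.1 ≠ w ∧ e.2 ≠ w) → v = w) := by
  classical
  have hAcard : (setA n m).card = m := cardA' n m (by omega)
  have hBcard : (setB n m).card = m := cardB' n m hm2
  set r : {x // x ∈ setA n m} → Finset (Fin n) :=
    fun a => (setB n m).filter (fun w => g a.1 w = true) with hr
  have hall : ∀ s : Finset {x // x ∈ setA n m}, s.card ≤ (s.biUnion r).card := by
    intro s
    by_contra hlt
    push_neg at hlt
    set S : Finset (Fin n) := s.image Subtype.val with hSdef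
    have hScard : S.card = s.card := Finset.card_image_of_injective s Subtype.val_injective
    have hSsub : S ⊆ setA n m := by
      intro x hx
      obtain ⟨a, _, rfl⟩ := Finset.mem_image.mp hx
      exact a.2
    have hSne : S.Nonempty := by
      rw [← Finset.card_pos, hScard]
      omega
    have hSm : S.card ≤ m := by rw [← hAcard]; exact Finset.card_le_card hSsub
    set N : Finset (Fin n) := s.biUnion r with hN
    have hNsub : N ⊆ setB n m := by
      intro x hx
      obtain ⟨a, _, hx⟩ := Finset.mem_biUnion.mp hx
      exact Finset.filter_subset _ _ hx
    have hT0card : (setB n m \ N).card = m - N.card := by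
      rw [Finset.card_sdiff_of_subset hNsub, hBcard]
    have hle : m + 1 - S.card ≤ (setB n m \ N).card := by
      rw [hT0card]; rw [hScard] at hSm ⊢; omega
    obtain ⟨T, hTsub, hTcard⟩ := Finset.exists_subset_card_eq hle
    obtain ⟨u, hu, w, hw, hg⟩ := hGd S T hSsub (hTsub.trans (Finset.sdiff_subset))
      hSne (by rw [hTcard]; omega)
    obtain ⟨a, has, hav⟩ := Finset.mem_image.mp hu
    have hwB : w ∈ setB n m := (hTsub.trans Finset.sdiff_subset) hw
    have hwN : w ∈ N := by
      apply Finset.mem_biUnion.mpr ⟨a, has, ?_⟩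
      rw [hr]
      exact Finset.mem_filter.mpr ⟨hwB, by rw [hav]; exact hg⟩
    have := Finset.mem_sdiff.mp (hTsub hw)
    exact this.2 hwN
  obtain ⟨f, hfinj, hfr⟩ := (Finset.all_card_le_biUnion_card_iff_existsInjective' r).mp hall
  have hfB : ∀ a, f a ∈ setB n m := fun a => Finset.filter_subset _ _ (hfr a)
  have hfg : ∀ a, g a.1 (f a) = true := fun a => (Finset.mem_filter.mp (hfr a)).2
  refine ⟨(setA n m).attach.image (fun a => (a.1, f a)), ?_, ?_, ?_⟩
  · rintro e he
    obtain ⟨a, _, rfl⟩ := Finset.mem_image.mp he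
    refine ⟨?_, hfg a⟩
    intro hc
    have h1 : ((a : Fin n) : ℕ) < m := mem_setA.mp a.2
    have h2 : m ≤ ((f a : Fin n) : ℕ) := (mem_setB.mp (hfB a)).1
    simp only at hc
    rw [hc] at h1; omega
  · rintro e he e' he' hne
    obtain ⟨a, _, rfl⟩ := Finset.mem_image.mp he
    obtain ⟨a', _, rfl⟩ := Finset.mem_image.mp he'
    have haa : a ≠ a' := by rintro rfl; exact hne rfl
    have hAB : ∀ (x y : {v // v ∈ setA n m}), (x : Fin n) ≠ f y := by
      intro x y hc
      have h1 : ((x : Fin n) : ℕ) < m := mem_setA.mp x.2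
      have h2 : m ≤ ((f y : Fin n) : ℕ) := (mem_setB.mp (hfB y)).1
      rw [hc] at h1; omega
    simp only
    exact ⟨fun hc => haa (Subtype.val_injective hc), hAB a a',
      fun hc => (hAB a' a) hc.symm, fun hc => haa (hfinj hc)⟩
  · intro v w hv hw
    have key : ∀ x : Fin n, (∀ e ∈ (setA n m).attach.image (fun a => (a.1, f a)),
        e.1 ≠ x ∧ e.2 ≠ x) → 2 * m ≤ (x : ℕ) := by
      intro x hx
      by_contra hc
      push_neg at hc
      rcases lt_or_ge (x : ℕ) m with h1 | h1
      · have hxA : x ∈ setA n m := mem_setA.mpr h1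
        have := hx (x, f ⟨x, hxA⟩)
          (Finset.mem_image.mpr ⟨⟨x, hxA⟩, Finset.mem_attach _ _, rfl⟩)
        exact this.1 rfl
      · have hxB : x ∈ setB n m := mem_setB.mpr ⟨h1, hc⟩
        have himg : Finset.univ.image (fun a : {v // v ∈ setA n m} => f a) = setB n m := by
          apply Finset.eq_of_subset_of_card_le
          · intro y hy
            obtain ⟨a, _, rfl⟩ := Finset.mem_image.mp hy
            exact hfB a
          · rw [Finset.card_image_of_injective _ hfinj, hBcard]
            simp [hAcard]
        have : x ∈ Finset.univ.image (fun a : {v // v ∈ setA n m} => f a) := by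
          rw [himg]; exact hxB
        obtain ⟨a, _, haf⟩ := Finset.mem_image.mp this
        have := hx (a.1, f a)
          (Finset.mem_image.mpr ⟨a, Finset.mem_attach _ _, rfl⟩)
        rw [haf] at this
        exact this.2 rfl
    have h1 := key v hv
    have h2 := key w hw
    apply Fin.ext
    have := v.2; have := w.2
    omega

end PMAux

/-- For a `(β, d₁, d₂, p)`-nice probability assignment with `β ≤ 1/4` and
`p ≥ log n / √n`, the inhomogeneous random graph contains a matching covering
all vertices except at most one, with probability at least
`1 - exp (-D (log n)²)` for some constant `D > 0` and all `n` large. -/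
theorem stmt10 (β d₁ d₂ : ℝ) (hβ0 : 0 < β) (hβ : β ≤ 1 / 4)
    (hd₁ : 0 < d₁) (hd₂ : 0 < d₂) (p : ℕ → ℝ)
    (hp0 : ∀ n, 0 < p n) (hp1 : ∀ n, p n < 1)
    (hplog : ∀ n : ℕ, Real.log n / Real.sqrt n ≤ p n) :
    ∃ D > (0 : ℝ), ∃ N : ℕ, ∀ n ≥ N,
      ∀ (Ω : Type) (_ : MeasurableSpace Ω) (μ : Measure Ω)
        (_ : IsProbabilityMeasure μ)
        (pr : Fin n → Fin n → ℝ) (X : Sym2 (Fin n) → Ω → Bool),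
        (∀ u v, pr u v = pr v u) →
        (∀ u v, 0 ≤ pr u v) → (∀ u v, pr u v ≤ 1) →
        (∀ e, Measurable (X e)) →
        iIndepFun X μ →
        (∀ u v : Fin n, μ {ω | X s(u, v) ω = true} = ENNReal.ofReal (pr u v)) →
        -- first niceness condition
        (∀ (u v : Fin n) (S₁ S₂ : Finset (Fin n)), Disjoint S₁ S₂ →
          u ∉ S₁ → u ∉ S₂ → v ∉ S₁ → v ∉ S₂ → S₁.card = S₂.card →
          β * n ≤ S₁.card → d₁ * S₁.card * p n ≤ ∑ w ∈ S₁, pr u w) →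
        -- second niceness condition
        (∀ (u v : Fin n) (S₁ S₂ : Finset (Fin n)), Disjoint S₁ S₂ →
          u ∉ S₁ → u ∉ S₂ → v ∉ S₁ → v ∉ S₂ → S₁.card = S₂.card →
          β * n ≤ S₁.card →
          d₂ * S₁.card * p n ^ 2 ≤ ∑ w₁ ∈ S₁, ∑ w₂ ∈ S₂, pr u w₁ * pr w₂ v) →
        ENNReal.ofReal (1 - Real.exp (-D * Real.log n ^ 2)) ≤
          μ {ω | ∃ M : Finset (Fin n × Fin n),
            (∀ e ∈ M, e.1 ≠ e.2 ∧ X s(e.1, e.2) ω = true) ∧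
            (∀ e ∈ M, ∀ e' ∈ M, e ≠ e' →
              e.1 ≠ e'.1 ∧ e.1 ≠ e'.2 ∧ e.2 ≠ e'.1 ∧ e.2 ≠ e'.2) ∧
            (∀ v w : Fin n, (∀ e ∈ M, e.1 ≠ v ∧ e.2 ≠ v) →
              (∀ e ∈ M, e.1 ≠ w ∧ e.2 ≠ w) → v = w)} := by
    classical
  have hd : 0 < d₁ * β := mul_pos hd₁ hβ0
  have hev : ∀ᶠ n : ℕ in Filter.atTop,
      10 ≤ n ∧ 1 ≤ Real.log n ∧ 3 + Real.log n ≤ d₁ * β * Real.sqrt n := by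
    have hcast : Filter.Tendsto (fun n : ℕ => (n : ℝ)) Filter.atTop Filter.atTop :=
      tendsto_natCast_atTop_atTop
    have h1 : ∀ᶠ n : ℕ in Filter.atTop, 10 ≤ n := Filter.eventually_ge_atTop 10
    have h2 : ∀ᶠ n : ℕ in Filter.atTop, 1 ≤ Real.log n :=
      (Real.tendsto_log_atTop.comp hcast).eventually_ge_atTop 1
    have h3r : ∀ᶠ x : ℝ in Filter.atTop, 3 + Real.log x ≤ d₁ * β * Real.sqrt x := by
      have hlo := isLittleO_log_rpow_atTop (by norm_num : (0:ℝ) < 1/2)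
      have hbound := hlo.bound (by positivity : (0:ℝ) < d₁ * β / 2)
      filter_upwards [hbound, Filter.eventually_ge_atTop ((6 / (d₁ * β)) ^ 2),
        Filter.eventually_ge_atTop (0:ℝ)] with x hx1 hx2 hx0
      have hsq : x ^ (1/2 : ℝ) = Real.sqrt x := (Real.sqrt_eq_rpow x).symm
      have hsqnn : 0 ≤ Real.sqrt x := Real.sqrt_nonneg x
      have h6 : 6 / (d₁ * β) ≤ Real.sqrt x := by
        rw [show (6:ℝ) / (d₁ * β) = |6 / (d₁*β)| from (abs_of_nonneg (by positivity)).symm]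
        rw [← Real.sqrt_sq_eq_abs]
        exact Real.sqrt_le_sqrt hx2
      have hlogb : Real.log x ≤ d₁ * β / 2 * Real.sqrt x := by
        have h := hx1
        rw [Real.norm_eq_abs, Real.norm_eq_abs, hsq, abs_of_nonneg hsqnn] at h
        exact le_trans (le_abs_self _) h
      have h3b : 3 ≤ d₁ * β / 2 * Real.sqrt x := by
        have he : d₁ * β / 2 * (6 / (d₁ * β)) = 3 := by field_simp; ring
        nlinarith [h6, hd]
      nlinarith [hlogb, h3b]
    exact h1.and (h2.and (hcast.eventually h3r))
  obtain ⟨N, hN⟩ := Filter.eventually_atTop.mp hev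
  refine ⟨1, one_pos, N, ?_⟩
  intro n hn Ω mΩ μ hμ pr X hsymm hnn hle1 hmeas hind hprob hnice1 _hnice2
  haveI := hμ
  obtain ⟨hn10, hlog1, hkey⟩ := hN n hn
  set m : ℕ := n / 2 with hmdef
  set r₀ : ℕ := Nat.ceil (β * (n : ℝ)) with hr₀def
  have hm2 : 2 * m ≤ n := by omega
  have hn2m : n ≤ 2 * m + 1 := by omega
  have hm1 : 1 ≤ m := by omega
  have hnpos : 0 < n := by omega
  have hnR : (0:ℝ) < (n:ℝ) := by exact_mod_cast hnpos
  have hq4 : r₀ ≤ (n + 3) / 4 := by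
    rw [hr₀def]
    apply Nat.ceil_le.mpr
    have h4q : (n:ℝ) ≤ 4 * (((n+3)/4 : ℕ) : ℝ) := by
      have h' : n ≤ 4 * ((n+3)/4) := by omega
      exact_mod_cast h'
    nlinarith [hnR.le, hβ, h4q, hβ0.le]
  have hr₀n : 2 * r₀ + 1 ≤ n := by omega
  have hcase : 2 * r₀ ≤ m + 2 := by omega
  have hβr₀ : β * n ≤ (r₀ : ℝ) := Nat.le_ceil _
  have hsqmul : Real.sqrt n * Real.sqrt n = (n:ℝ) := Real.mul_self_sqrt hnR.le
  have hsqpos : 0 < Real.sqrt n := Real.sqrt_pos.mpr hnR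
  have hΛ1 : d₁ * β * Real.sqrt n * Real.log n ≤ d₁ * (r₀ : ℝ) * p n := by
    have e1 : d₁ * (β * (n:ℝ)) * (Real.log n / Real.sqrt n)
        = d₁ * β * Real.sqrt n * Real.log n := by
      have hds : (n:ℝ) / Real.sqrt n = Real.sqrt n := Real.div_sqrt
      calc d₁ * (β * (n:ℝ)) * (Real.log n / Real.sqrt n)
          = d₁ * β * Real.log n * ((n:ℝ) / Real.sqrt n) := by ring
        _ = d₁ * β * Real.log n * Real.sqrt n := by rw [hds]
        _ = d₁ * β * Real.sqrt n * Real.log n := by ring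
    have h2 : d₁ * (β * (n:ℝ)) * (Real.log n / Real.sqrt n) ≤ d₁ * (β * (n:ℝ)) * p n :=
      mul_le_mul_of_nonneg_left (hplog n) (by positivity)
    have h3 : d₁ * (β * (n:ℝ)) * p n ≤ d₁ * (r₀:ℝ) * p n := by
      apply mul_le_mul_of_nonneg_right _ (hp0 n).le
      exact mul_le_mul_of_nonneg_left hβr₀ hd₁.le
    linarith [e1 ▸ h2]
  have hΛlow : 3 * Real.log m + Real.log n ^ 2 ≤ d₁ * (r₀ : ℝ) * p n := by
    have hmR : (0:ℝ) < (m:ℝ) := by exact_mod_cast hm1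
    have hlogm : Real.log m ≤ Real.log n :=
      Real.log_le_log hmR (by exact_mod_cast (by omega : m ≤ n))
    have h1 : (3 + Real.log n) * Real.log n ≤ d₁ * β * Real.sqrt n * Real.log n :=
      mul_le_mul_of_nonneg_right hkey (by linarith)
    nlinarith [hΛ1, hlogm, hlog1]
  have hAcard : (setA n m).card = m := cardA' n m (by omega)
  have hBcard : (setB n m).card = m := cardB' n m hm2
  have hABdisj : ∀ S T : Finset (Fin n), S ⊆ setA n m → T ⊆ setB n m → Disjoint S T := by
    intro S T hS hT
    rw [Finset.disjoint_left]
    intro x hxS hxT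
    have h1 := mem_setA.mp (hS hxS)
    have h2 := mem_setB.mp (hT hxT)
    omega
  set Gd : Set Ω := {ω | ∀ S T : Finset (Fin n), S ⊆ setA n m → T ⊆ setB n m →
      S.Nonempty → S.card + T.card = m + 1 →
      ∃ u ∈ S, ∃ w ∈ T, X s(u, w) ω = true} with hGddef
  have hbadbound : ∀ s ∈ Finset.Icc 1 m,
      ∀ P ∈ (setA n m).powersetCard s ×ˢ (setB n m).powersetCard (m + 1 - s),
      μ {ω | ∀ u ∈ P.1, ∀ w ∈ P.2, X s(u, w) ω = false}
        ≤ ENNReal.ofReal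
            (Real.exp (-((min s (m + 1 - s) : ℕ) : ℝ) * (d₁ * (r₀:ℝ) * p n))) := by
    intro s hs P hP
    rw [Finset.mem_Icc] at hs
    rw [Finset.mem_product] at hP
    obtain ⟨hP1, hP2⟩ := hP
    rw [Finset.mem_powersetCard] at hP1 hP2
    have hdisj := hABdisj P.1 P.2 hP1.1 hP2.1
    have hcard1 : P.1.card = s := hP1.2
    have hcard2 : P.2.card = m + 1 - s := hP2.2
    have hmax : r₀ ≤ P.2.card ∨ r₀ ≤ P.1.card := by
      rcases le_or_gt r₀ (m + 1 - s) with h | h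
      · left; omega
      · right; omega
    have hpl := pair_lower hsymm hnn hd₁.le (hp0 n).le hnice1 hβr₀ hr₀n P.1 P.2 hdisj hmax
    have hbp := bad_prob μ pr X hsymm hnn hmeas hind hprob P.1 P.2 hdisj
    refine hbp.trans (ENNReal.ofReal_le_ofReal (Real.exp_le_exp.mpr ?_))
    rw [hcard1, hcard2] at hpl
    rw [neg_mul]
    exact neg_le_neg hpl
  have hGdc : μ Gdᶜ ≤ ENNReal.ofReal (Real.exp (-(Real.log n ^ 2))) := by
    have hsub : Gdᶜ ⊆ ⋃ s ∈ Finset.Icc 1 m,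
        ⋃ P ∈ (setA n m).powersetCard s ×ˢ (setB n m).powersetCard (m + 1 - s),
        {ω | ∀ u ∈ P.1, ∀ w ∈ P.2, X s(u, w) ω = false} := by
      intro ω hω
      rw [Set.mem_compl_iff, hGddef, Set.mem_setOf_eq] at hω
      push_neg at hω
      obtain ⟨S, T, hS, hT, hne, hcard, hfalse⟩ := hω
      have hSm : S.card ≤ m := hAcard ▸ Finset.card_le_card hS
      have hS1 : 1 ≤ S.card := Finset.card_pos.mpr hne
      refine Set.mem_iUnion₂.mpr ⟨S.card, Finset.mem_Icc.mpr ⟨hS1, hSm⟩,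
        Set.mem_iUnion₂.mpr ⟨(S, T), ?_, ?_⟩⟩
      · rw [Finset.mem_product]
        exact ⟨Finset.mem_powersetCard.mpr ⟨hS, rfl⟩,
          Finset.mem_powersetCard.mpr ⟨hT, show T.card = m + 1 - S.card by omega⟩⟩
      · intro u hu w hw
        have := hfalse u hu w hw
        simpa using this
    calc μ Gdᶜ ≤ μ (⋃ s ∈ Finset.Icc 1 m,
          ⋃ P ∈ (setA n m).powersetCard s ×ˢ (setB n m).powersetCard (m + 1 - s),
          {ω | ∀ u ∈ P.1, ∀ w ∈ P.2, X s(u, w) ω = false}) := measure_mono hsub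
      _ ≤ ∑ s ∈ Finset.Icc 1 m, μ (⋃ P ∈ (setA n m).powersetCard s ×ˢ
            (setB n m).powersetCard (m + 1 - s),
            {ω | ∀ u ∈ P.1, ∀ w ∈ P.2, X s(u, w) ω = false}) :=
          measure_biUnion_finset_le _ _
      _ ≤ ∑ s ∈ Finset.Icc 1 m, ∑ P ∈ (setA n m).powersetCard s ×ˢ
            (setB n m).powersetCard (m + 1 - s),
            μ {ω | ∀ u ∈ P.1, ∀ w ∈ P.2, X s(u, w) ω = false} :=
          Finset.sum_le_sum (fun s _ => measure_biUnion_finset_le _ _)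
      _ ≤ ∑ s ∈ Finset.Icc 1 m, ∑ _P ∈ (setA n m).powersetCard s ×ˢ
            (setB n m).powersetCard (m + 1 - s),
            ENNReal.ofReal
              (Real.exp (-((min s (m + 1 - s) : ℕ) : ℝ) * (d₁ * (r₀:ℝ) * p n))) :=
          Finset.sum_le_sum (fun s hs => Finset.sum_le_sum (fun P hP => hbadbound s hs P hP))
      _ = ∑ s ∈ Finset.Icc 1 m, ENNReal.ofReal
            (((m.choose s : ℝ) * (m.choose (m + 1 - s) : ℝ)) *
              Real.exp (-((min s (m + 1 - s) : ℕ) : ℝ) * (d₁ * (r₀:ℝ) * p n))) := by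
          apply Finset.sum_congr rfl
          intro s _
          rw [Finset.sum_const, Finset.card_product, Finset.card_powersetCard,
            Finset.card_powersetCard, hAcard, hBcard, nsmul_eq_mul]
          rw [← ENNReal.ofReal_natCast (m.choose s * m.choose (m + 1 - s)),
            ← ENNReal.ofReal_mul (by positivity)]
          congr 1
          push_cast
          ring
      _ = ENNReal.ofReal (∑ s ∈ Finset.Icc 1 m,
            ((m.choose s : ℝ) * (m.choose (m + 1 - s) : ℝ) *
              Real.exp (-((min s (m + 1 - s) : ℕ) : ℝ) * (d₁ * (r₀:ℝ) * p n)))) :=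
          (ENNReal.ofReal_sum_of_nonneg (fun s _ => by positivity)).symm
      _ ≤ ENNReal.ofReal (Real.exp (-(Real.log n ^ 2))) :=
          ENNReal.ofReal_le_ofReal
            (union_sum m (d₁ * (r₀:ℝ) * p n) (Real.log n ^ 2) hm1 (sq_nonneg _) hΛlow)
  have h1 : (1:ENNReal) ≤ μ Gd + μ Gdᶜ := by
    rw [← measure_univ (μ := μ), ← Set.union_compl_self Gd]
    exact measure_union_le _ _
  have hGdlb : 1 - ENNReal.ofReal (Real.exp (-(Real.log n ^ 2))) ≤ μ Gd :=
    le_trans (tsub_le_tsub_left hGdc 1) (tsub_le_iff_right.mpr h1)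
  have hGdsub : Gd ⊆ {ω | ∃ M : Finset (Fin n × Fin n),
      (∀ e ∈ M, e.1 ≠ e.2 ∧ X s(e.1, e.2) ω = true) ∧
      (∀ e ∈ M, ∀ e' ∈ M, e ≠ e' →
        e.1 ≠ e'.1 ∧ e.1 ≠ e'.2 ∧ e.2 ≠ e'.1 ∧ e.2 ≠ e'.2) ∧
      (∀ v w : Fin n, (∀ e ∈ M, e.1 ≠ v ∧ e.2 ≠ v) →
        (∀ e ∈ M, e.1 ≠ w ∧ e.2 ≠ w) → v = w)} := by
    intro ω hω
    exact matching_det hm2 hn2m (fun u w => X s(u, w) ω) hω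
  have hofreal : ENNReal.ofReal (1 - Real.exp (-1 * Real.log n ^ 2))
      = 1 - ENNReal.ofReal (Real.exp (-(Real.log n ^ 2))) := by
    rw [show (-1 : ℝ) * Real.log n ^ 2 = -(Real.log n ^ 2) by ring,
      ENNReal.ofReal_sub _ (Real.exp_pos _).le, ENNReal.ofReal_one]
  rw [hofreal]
  exact le_trans hGdlb (measure_mono hGdsub)
end

section
/- Let G be the inhomogeneous random graph on n vertices with independent edges of probabilities p(u,v) satisfying the (α,c₁,c₂,p)-good condition, and let S be a fixed set of s vertices with 1 ≤ s ≤ 1/(10 c₂ p). Then the expected number of vertices outside S adjacent in G to at least one vertex of S satisfies (3 c₁ n p s)/4 ≤ E[N_out(S)] ≤ c₂ n p s, for all sufficiently large n. -/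
open MeasureTheory ProbabilityTheory
open scoped Classical

set_option maxHeartbeats 1000000

/-- concavity of `1 - exp (-·)`: chord below. -/
lemma exp_conv {q τ : ℝ} (hq0 : 0 ≤ q) (hqτ : q ≤ τ) (hτ : 0 < τ) :
    q * (1 - Real.exp (-τ)) ≤ τ * (1 - Real.exp (-q)) := by
  have ha : 0 ≤ q / τ := div_nonneg hq0 hτ.le
  have hb : 0 ≤ 1 - q / τ := by
    rw [sub_nonneg, div_le_one hτ]; exact hqτ
  have hab : q / τ + (1 - q / τ) = 1 := by ring
  have h := convexOn_exp.2 (Set.mem_univ (-τ)) (Set.mem_univ (0:ℝ)) ha hb hab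
  simp only [smul_eq_mul, mul_zero, add_zero, Real.exp_zero, mul_one] at h
  have hq : (q / τ) * (-τ) = -q := by field_simp
  rw [hq] at h
  have h2 : Real.exp (-q) ≤ (q / τ) * Real.exp (-τ) + (1 - q / τ) := h
  have := mul_le_mul_of_nonneg_left (sub_le_sub (le_refl (1:ℝ)) h2) hτ.le
  calc q * (1 - Real.exp (-τ))
      = τ * (1 - ((q / τ) * Real.exp (-τ) + (1 - q / τ))) := by field_simp; ring
    _ ≤ τ * (1 - Real.exp (-q)) := this

lemma exists_min_subset {γ : Type*} [DecidableEq γ] (q : γ → ℝ) :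
    ∀ (m : ℕ) (A : Finset γ), m ≤ A.card →
      ∃ B ⊆ A, B.card = m ∧ ∀ b ∈ B, ∀ a ∈ A \ B, q b ≤ q a := by
  intro m
  induction m with
  | zero => exact fun A _ => ⟨∅, Finset.empty_subset _, rfl, by simp⟩
  | succ m ih =>
    intro A hm
    obtain ⟨B, hBA, hBc, hBmin⟩ := ih A (le_trans (Nat.le_succ m) hm)
    have hne : (A \ B).Nonempty := by
      rw [← Finset.card_pos, Finset.card_sdiff_of_subset hBA, hBc]
      omega
    obtain ⟨a, ha, hamin⟩ := Finset.exists_min_image (A \ B) q hne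
    have haA : a ∈ A := (Finset.mem_sdiff.mp ha).1
    have haB : a ∉ B := (Finset.mem_sdiff.mp ha).2
    refine ⟨insert a B, ?_, ?_, ?_⟩
    · exact Finset.insert_subset haA hBA
    · rw [Finset.card_insert_of_notMem haB, hBc]
    · intro b hb x hx
      have hx' : x ∈ A \ B := by
        rcases Finset.mem_sdiff.mp hx with ⟨hxA, hxiB⟩
        exact Finset.mem_sdiff.mpr ⟨hxA, fun h => hxiB (Finset.mem_insert_of_mem h)⟩
      rcases Finset.mem_insert.mp hb with rfl | hbB
      · exact hamin x hx'
      · exact hBmin b hbB x hx'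


lemma prob_bounds {n : ℕ} {Ω : Type} [MeasurableSpace Ω] (μ : Measure Ω)
    [IsProbabilityMeasure μ]
    (pr : Fin n → Fin n → ℝ) (X : Sym2 (Fin n) → Ω → Bool)
    (hpr0 : ∀ u v, 0 ≤ pr u v) (hpr1 : ∀ u v, pr u v ≤ 1)
    (hXm : ∀ e, Measurable (X e))
    (hind : iIndepFun X μ)
    (hXp : ∀ u v, μ {ω | X s(u, v) ω = true} = ENNReal.ofReal (pr u v))
    (S : Finset (Fin n)) (v : Fin n) (hv : v ∉ S) :
    MeasurableSet {ω | ∃ u ∈ S, X s(u,v) ω = true} ∧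
    1 - Real.exp (-(∑ u ∈ S, pr u v)) ≤ (μ {ω | ∃ u ∈ S, X s(u,v) ω = true}).toReal ∧
    (μ {ω | ∃ u ∈ S, X s(u,v) ω = true}).toReal ≤ ∑ u ∈ S, pr u v := by
  set A : Set Ω := {ω | ∃ u ∈ S, X s(u,v) ω = true} with hA
  have hAeq : A = ⋃ u ∈ S, (X s(u,v)) ⁻¹' {true} := by
    ext ω; simp [hA, Set.mem_iUnion]
  have hmeas : MeasurableSet A := by
    rw [hAeq]
    exact MeasurableSet.biUnion S.countable_toSet
      (fun u _ => hXm _ (measurableSet_singleton true))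
  refine ⟨hmeas, ?_, ?_⟩
  · -- lower bound
    have hAc : Aᶜ = ⋂ u ∈ S, (X s(u,v)) ⁻¹' {false} := by
      ext ω
      simp only [hA, Set.mem_compl_iff, Set.mem_setOf_eq, not_exists, not_and,
        Set.mem_iInter, Set.mem_preimage, Set.mem_singleton_iff, Bool.not_eq_true]
    -- reindex over Sym2 image
    have hinj : ∀ x ∈ S, ∀ y ∈ S, (fun u => s(u,v)) x = (fun u => s(u,v)) y → x = y := by
      intro x hx y hy hxy
      rw [Sym2.eq_iff] at hxy
      rcases hxy with ⟨h1, _⟩ | ⟨h1, h2⟩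
      · exact h1
      · exact absurd (h2 ▸ hy) hv
    have hiinter : (⋂ u ∈ S, (X s(u,v)) ⁻¹' {false})
        = ⋂ e ∈ S.image (fun u => s(u,v)), (X e) ⁻¹' {false} := by
      ext ω; simp [Set.mem_iInter]
    have hindep := hind.meas_biInter (S := S.image (fun u => s(u,v)))
      (s := fun e => (X e) ⁻¹' {false}) (fun e _ => ⟨{false}, trivial, rfl⟩)
    have hfalse : ∀ u : Fin n, μ ((X s(u,v)) ⁻¹' {false}) = ENNReal.ofReal (1 - pr u v) := by
      intro u
      have hc : (X s(u,v)) ⁻¹' {false} = {ω | X s(u,v) ω = true}ᶜ := by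
        ext ω; simp [Bool.not_eq_true]
      rw [hc, prob_compl_eq_one_sub, hXp u v,
        ENNReal.ofReal_sub 1 (hpr0 u v), ENNReal.ofReal_one]
      exact hXm _ (measurableSet_singleton true)
    have hprod : μ Aᶜ = ENNReal.ofReal (∏ u ∈ S, (1 - pr u v)) := by
      rw [hAc, hiinter, hindep, Finset.prod_image hinj]
      rw [ENNReal.ofReal_prod_of_nonneg (fun u _ => by linarith [hpr1 u v])]
      exact Finset.prod_congr rfl fun u _ => hfalse u
    have hApr : μ A = 1 - ENNReal.ofReal (∏ u ∈ S, (1 - pr u v)) := by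
      have := prob_compl_eq_one_sub (μ := μ) hmeas.compl
      rw [compl_compl, hprod] at this
      exact this
    have hprodle : (∏ u ∈ S, (1 - pr u v)) ≤ 1 := by
      apply Finset.prod_le_one
      · intro u _; linarith [hpr1 u v]
      · intro u _; linarith [hpr0 u v]
    have hprodnn : 0 ≤ ∏ u ∈ S, (1 - pr u v) :=
      Finset.prod_nonneg fun u _ => by linarith [hpr1 u v]
    have htr : (μ A).toReal = 1 - ∏ u ∈ S, (1 - pr u v) := by
      rw [hApr, ENNReal.toReal_sub_of_le (by
        simpa using ENNReal.ofReal_le_ofReal hprodle) ENNReal.one_ne_top,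
        ENNReal.toReal_one, ENNReal.toReal_ofReal hprodnn]
    rw [htr]
    have : (∏ u ∈ S, (1 - pr u v)) ≤ Real.exp (-(∑ u ∈ S, pr u v)) := by
      rw [← Finset.sum_neg_distrib, Real.exp_sum]
      apply Finset.prod_le_prod (fun u _ => by linarith [hpr1 u v])
      intro u _
      linarith [Real.add_one_le_exp (-(pr u v))]
    linarith
  · -- upper bound
    have h1 : μ A ≤ ∑ u ∈ S, μ ((X s(u,v)) ⁻¹' {true}) := by
      rw [hAeq]; exact measure_biUnion_finset_le S _
    have h2 : ∀ u : Fin n, μ ((X s(u,v)) ⁻¹' {true}) = ENNReal.ofReal (pr u v) := by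
      intro u; rw [← hXp u v]; rfl
    have h3 : μ A ≤ ENNReal.ofReal (∑ u ∈ S, pr u v) := by
      rw [ENNReal.ofReal_sum_of_nonneg (fun u _ => hpr0 u v)]
      refine h1.trans ?_
      exact le_of_eq (Finset.sum_congr rfl fun u _ => h2 u)
    exact ENNReal.toReal_le_of_le_ofReal (Finset.sum_nonneg fun u _ => hpr0 u v) h3

/-- For an `(α, c₁, c₂, p)`-good assignment with `α ≤ 7/8`, `p = C n^{-k/(k+1)}`,
and a fixed set `S` of `s` vertices with `1 ≤ s ≤ 1/(10 c₂ p)`, the expected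
number of vertices outside `S` adjacent to some vertex of `S` satisfies
`3 c₁ n p s / 4 ≤ E[N_out(S)] ≤ c₂ n p s` for all `n` large. -/
theorem stmt12 (α c₁ c₂ C : ℝ) (k : ℕ) (hk : 1 ≤ k)
    (hα0 : 0 < α) (hα : α ≤ 7 / 8) (hc₁ : 0 < c₁) (hc₂ : 0 < c₂) (hC : 0 < C)
    (p : ℕ → ℝ)
    (hp : ∀ n : ℕ, p n = C * (n : ℝ) ^ (-(k : ℝ) / ((k : ℝ) + 1))) :
    ∃ N : ℕ, ∀ n ≥ N,
      ∀ (Ω : Type) (_ : MeasurableSpace Ω) (μ : Measure Ω)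
        (_ : IsProbabilityMeasure μ)
        (pr : Fin n → Fin n → ℝ) (X : Sym2 (Fin n) → Ω → Bool),
        (∀ u v, pr u v = pr v u) →
        (∀ u v, 0 ≤ pr u v) → (∀ u v, pr u v ≤ 1) →
        (∀ e, Measurable (X e)) →
        iIndepFun X μ →
        (∀ u v : Fin n, μ {ω | X s(u, v) ω = true} = ENNReal.ofReal (pr u v)) →
        (∀ (u : Fin n) (S : Finset (Fin n)), u ∉ S → α * n ≤ S.card →
          c₁ * S.card * p n ≤ ∑ v ∈ S, pr u v ∧
            ∑ v ∈ S, pr u v ≤ c₂ * S.card * p n) →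
        ∀ S : Finset (Fin n), 1 ≤ S.card →
          (S.card : ℝ) ≤ 1 / (10 * c₂ * p n) →
          3 * c₁ * n * p n * S.card / 4 ≤
              (∫ ω, ((Finset.univ.filter (fun v : Fin n =>
                v ∉ S ∧ ∃ u ∈ S, X s(u, v) ω = true)).card : ℝ) ∂μ) ∧
            (∫ ω, ((Finset.univ.filter (fun v : Fin n =>
                v ∉ S ∧ ∃ u ∈ S, X s(u, v) ω = true)).card : ℝ) ∂μ) ≤
              c₂ * n * p n * S.card := by
  have hk1 : (0:ℝ) < (k:ℝ) + 1 := by positivity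
  have h1k : (0:ℝ) < 1/((k:ℝ)+1) := by positivity
  have hD : (0:ℝ) < (10*c₂*C)/400 := by positivity
  have h0 : Filter.Tendsto (fun x:ℝ => x ^ (-(1/((k:ℝ)+1)))) Filter.atTop (nhds 0) :=
    tendsto_rpow_neg_atTop h1k
  have hev : ∀ᶠ x:ℝ in Filter.atTop, x ^ (-(1/((k:ℝ)+1))) < (10*c₂*C)/400 :=
    h0.eventually (gt_mem_nhds hD)
  obtain ⟨R, hR⟩ := Filter.eventually_atTop.mp hev
  refine ⟨max 400 (⌈R⌉₊ + 1), fun n hn => ?_⟩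
  intro Ω mΩ μ hμprob pr X hsymm hpr0 hpr1 hXm hind hXp hgood S hS1 hScard
  have hn400 : (400:ℕ) ≤ n := le_trans (le_max_left _ _) hn
  have hn0R : (0:ℝ) < n := by
    have : (400:ℝ) ≤ (n:ℝ) := by exact_mod_cast hn400
    linarith
  have hn400R : (400:ℝ) ≤ (n:ℝ) := by exact_mod_cast hn400
  have hnR : R ≤ (n:ℝ) := by
    have h1 : (⌈R⌉₊ + 1 : ℕ) ≤ n := le_trans (le_max_right _ _) hn
    have h2 : R ≤ (⌈R⌉₊ : ℝ) := Nat.le_ceil R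
    have h3 : ((⌈R⌉₊ : ℕ) : ℝ) ≤ (n:ℝ) := by exact_mod_cast le_trans (Nat.le_succ _) h1
    linarith
  have hsmall : (n:ℝ) ^ (-(1/((k:ℝ)+1))) < (10*c₂*C)/400 := hR n hnR
  have hP : 0 < p n := by
    rw [hp n]
    exact mul_pos hC (Real.rpow_pos_of_pos hn0R _)
  -- bound on S.card
  have hsplit : (n:ℝ)^((k:ℝ)/((k:ℝ)+1)) = n * (n:ℝ)^(-(1/((k:ℝ)+1))) := by
    rw [show (k:ℝ)/((k:ℝ)+1) = 1 + (-(1/((k:ℝ)+1))) by field_simp; ring,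
      Real.rpow_add hn0R, Real.rpow_one]
  have hinv : 1/(10*c₂*p n) = (n:ℝ)^((k:ℝ)/((k:ℝ)+1)) / (10*c₂*C) := by
    rw [hp n, show -(k:ℝ)/((k:ℝ)+1) = -((k:ℝ)/((k:ℝ)+1)) by ring,
      Real.rpow_neg hn0R.le]
    rw [eq_div_iff (by positivity)]
    have hpow : (0:ℝ) < (n:ℝ)^((k:ℝ)/((k:ℝ)+1)) := Real.rpow_pos_of_pos hn0R _
    field_simp
  have hs400 : (S.card:ℝ) ≤ (n:ℝ)/400 := by
    have h1 : (n:ℝ)^((k:ℝ)/((k:ℝ)+1)) / (10*c₂*C) ≤ (n:ℝ)/400 := by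
      rw [hsplit, div_le_iff₀ (by positivity)]
      have := mul_le_mul_of_nonneg_left hsmall.le hn0R.le
      calc (n:ℝ) * (n:ℝ)^(-(1/((k:ℝ)+1))) ≤ n * ((10*c₂*C)/400) := this
        _ = (n:ℝ)/400 * (10*c₂*C) := by ring
    rw [hinv] at hScard
    linarith
  have hs200 : (S.card:ℝ) + 1 ≤ (n:ℝ)/200 := by linarith
  have hscard0 : (0:ℝ) ≤ S.card := Nat.cast_nonneg _
  -- c₁ ≤ c₂
  have hc12 : c₁ ≤ c₂ := by
    have hnpos : 0 < n := by omega
    let u₀ : Fin n := ⟨0, hnpos⟩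
    have hTcard : ((Finset.univ.erase u₀).card : ℝ) = (n:ℝ) - 1 := by
      rw [Finset.card_erase_of_mem (Finset.mem_univ _), Finset.card_univ, Fintype.card_fin]
      have : 1 ≤ n := hnpos
      push_cast [this]
      ring
    have hTα : α * n ≤ ((Finset.univ.erase u₀).card : ℝ) := by
      rw [hTcard]
      nlinarith
    obtain ⟨hg1, hg2⟩ := hgood u₀ _ (Finset.notMem_erase _ _) hTα
    have hcp : (0:ℝ) < ((Finset.univ.erase u₀).card : ℝ) * p n := by
      rw [hTcard]
      have h1 : (0:ℝ) < (n:ℝ) - 1 := by linarith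
      exact mul_pos h1 hP
    have : c₁ * (((Finset.univ.erase u₀).card : ℝ) * p n)
        ≤ c₂ * (((Finset.univ.erase u₀).card : ℝ) * p n) := by
      calc c₁ * (((Finset.univ.erase u₀).card : ℝ) * p n)
          = c₁ * ((Finset.univ.erase u₀).card : ℝ) * p n := by ring
        _ ≤ ∑ v ∈ Finset.univ.erase u₀, pr u₀ v := hg1
        _ ≤ c₂ * ((Finset.univ.erase u₀).card : ℝ) * p n := hg2
        _ = c₂ * (((Finset.univ.erase u₀).card : ℝ) * p n) := by ring
    exact le_of_mul_le_mul_right (by linarith [this]) hcp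
  have hc2ps : c₂ * p n * S.card ≤ 1/10 := by
    have h10 : (0:ℝ) < 10*c₂*p n := by positivity
    have h1 := mul_le_mul_of_nonneg_left hScard h10.le
    rw [mul_one_div, div_self h10.ne'] at h1
    nlinarith
  have hc1ps : c₁ * p n * S.card ≤ 1/10 := by
    nlinarith [mul_le_mul_of_nonneg_right hc12 (mul_nonneg hP.le hscard0)]
  -- notation
  set q : Fin n → ℝ := fun v => ∑ u ∈ S, pr u v with hqdef
  set A : Fin n → Set Ω := fun v => {ω | ∃ u ∈ S, X s(u,v) ω = true} with hAdef
  have hPB : ∀ v ∉ S, MeasurableSet (A v) ∧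
      1 - Real.exp (-(q v)) ≤ (μ (A v)).toReal ∧ (μ (A v)).toReal ≤ q v :=
    fun v hv => prob_bounds μ pr X hpr0 hpr1 hXm hind hXp S v hv
  have hq0 : ∀ v, 0 ≤ q v := fun v => Finset.sum_nonneg fun u _ => hpr0 u v
  have htr0 : ∀ v : Fin n, 0 ≤ (μ (A v)).toReal := fun v => ENNReal.toReal_nonneg
  have hSsub : ∀ v ∈ Finset.univ \ S, v ∉ S := fun v hv => (Finset.mem_sdiff.mp hv).2
  -- the expectation
  have hint : (∫ ω, ((Finset.univ.filter (fun v : Fin n =>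
        v ∉ S ∧ ∃ u ∈ S, X s(u, v) ω = true)).card : ℝ) ∂μ)
      = ∑ v ∈ Finset.univ \ S, (μ (A v)).toReal := by
    have hfun : ∀ ω : Ω, ((Finset.univ.filter (fun v : Fin n =>
        v ∉ S ∧ ∃ u ∈ S, X s(u, v) ω = true)).card : ℝ)
        = ∑ v ∈ Finset.univ \ S, (A v).indicator (fun _ => (1:ℝ)) ω := by
      intro ω
      rw [Finset.card_filter]
      push_cast
      rw [← Finset.sum_subset (Finset.sdiff_subset : Finset.univ \ S ⊆ Finset.univ)]
      · apply Finset.sum_congr rfl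
        intro v hv
        have hvS : v ∉ S := hSsub v hv
        by_cases hQ : ω ∈ A v
        · have hQ' : ∃ u ∈ S, X s(u,v) ω = true := hQ
          simp [Set.indicator_apply, hQ, hvS, hQ']
        · have hQ' : ¬ ∃ u ∈ S, X s(u,v) ω = true := hQ
          simp [Set.indicator_apply, hQ, hQ']
      · intro v _ hv
        have hvS : v ∈ S := by simpa using hv
        simp [hvS]
    calc (∫ ω, ((Finset.univ.filter (fun v : Fin n =>
            v ∉ S ∧ ∃ u ∈ S, X s(u, v) ω = true)).card : ℝ) ∂μ)
        = ∫ ω, (∑ v ∈ Finset.univ \ S, (A v).indicator (fun _ => (1:ℝ)) ω) ∂μ :=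
          integral_congr_ae (Filter.Eventually.of_forall hfun)
      _ = ∑ v ∈ Finset.univ \ S, ∫ ω, (A v).indicator (fun _ => (1:ℝ)) ω ∂μ :=
          integral_finset_sum _ (fun v hv =>
            (integrable_const (1:ℝ)).indicator ((hPB v (hSsub v hv)).1))
      _ = ∑ v ∈ Finset.univ \ S, (μ (A v)).toReal := by
          apply Finset.sum_congr rfl
          intro v hv
          rw [integral_indicator_const (1:ℝ) ((hPB v (hSsub v hv)).1)]
          simp
          rfl
  -- cardinalities
  have hsle : S.card ≤ n := by
    have := Finset.card_le_univ S
    simpa using this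
  have hcardSc : (Finset.univ \ S).card = n - S.card := by
    rw [Finset.card_sdiff_of_subset (Finset.subset_univ S), Finset.card_univ, Fintype.card_fin]
  have hcardScR : ((Finset.univ \ S).card : ℝ) = (n:ℝ) - S.card := by
    rw [hcardSc]; push_cast [hsle]; ring
  have hαSc : α * n ≤ ((Finset.univ \ S).card : ℝ) := by
    rw [hcardScR]
    linarith only [mul_le_mul_of_nonneg_right hα hn0R.le, hs200, hn0R]
  -- goodness summed over S
  have hqsum : ∀ T : Finset (Fin n), T ⊆ Finset.univ \ S → α * n ≤ (T.card:ℝ) →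
      c₁ * T.card * p n * S.card ≤ ∑ v ∈ T, q v ∧
        ∑ v ∈ T, q v ≤ c₂ * T.card * p n * S.card := by
    intro T hTsub hTα
    have hswap : ∑ v ∈ T, q v = ∑ u ∈ S, ∑ v ∈ T, pr u v := Finset.sum_comm
    have hnotmem : ∀ u ∈ S, u ∉ T := fun u hu huT => (hSsub u (hTsub huT)) hu
    constructor
    · rw [hswap]
      calc c₁ * T.card * p n * S.card = ∑ _u ∈ S, c₁ * T.card * p n := by
            rw [Finset.sum_const, nsmul_eq_mul]; ring
        _ ≤ ∑ u ∈ S, ∑ v ∈ T, pr u v :=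
            Finset.sum_le_sum fun u hu => (hgood u T (hnotmem u hu) hTα).1
    · rw [hswap]
      calc ∑ u ∈ S, ∑ v ∈ T, pr u v ≤ ∑ _u ∈ S, c₂ * T.card * p n :=
            Finset.sum_le_sum fun u hu => (hgood u T (hnotmem u hu) hTα).2
        _ = c₂ * T.card * p n * S.card := by rw [Finset.sum_const, nsmul_eq_mul]; ring
  -- numeric exponential facts
  have hexp4 : Real.exp (-(1/4 : ℝ)) ≤ 11/14 := by
    have h16 : (17/16 : ℝ) ≤ Real.exp (1/16) := by
      have := Real.add_one_le_exp (1/16 : ℝ); linarith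
    have hpow : ((17:ℝ)/16)^(4:ℕ) ≤ (Real.exp (1/16))^(4:ℕ) :=
      pow_le_pow_left₀ (by norm_num) h16 4
    have hq : Real.exp (1/4 : ℝ) = (Real.exp (1/16))^(4:ℕ) := by
      rw [← Real.exp_nat_mul]; norm_num
    have h4 : (14/11 : ℝ) ≤ Real.exp (1/4) := by
      rw [hq]; nlinarith
    rw [Real.exp_neg, inv_le_comm₀ (Real.exp_pos _) (by norm_num)]
    calc (11/14 : ℝ)⁻¹ = 14/11 := by norm_num
      _ ≤ Real.exp (1/4) := h4
  have hexp1 : Real.exp (-(1:ℝ)) ≤ 46/125 := by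
    rw [Real.exp_neg, inv_le_comm₀ (Real.exp_pos _) (by norm_num)]
    have := Real.exp_one_gt_d9
    calc (46/125 : ℝ)⁻¹ = 125/46 := by norm_num
      _ ≤ Real.exp 1 := by linarith
  clear_value q A
  rw [hint]
  clear hint
  constructor
  · -- lower bound
    set m : ℕ := n - n/8 with hmdef
    clear_value m
    have h8s : 8 * S.card ≤ n := by
      have : (8:ℝ) * S.card ≤ (n:ℝ) := by linarith
      exact_mod_cast this
    have hdivle : ((n/8 : ℕ):ℝ) * 8 ≤ (n:ℝ) := by
      exact_mod_cast Nat.div_mul_le_self n 8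
    have hdivge : (n:ℝ) - 7 ≤ 8 * ((n/8 : ℕ):ℝ) := by
      have : n ≤ 8 * (n/8) + 7 := by omega
      have := (Nat.cast_le (α := ℝ)).mpr this
      push_cast at this
      linarith
    have hmcast : (m:ℝ) = (n:ℝ) - ((n/8 : ℕ):ℝ) := by
      rw [hmdef, Nat.cast_sub (Nat.div_le_self n 8)]
    have hm78 : (7/8:ℝ) * n ≤ (m:ℝ) := by rw [hmcast]; linarith
    have hmlen : m ≤ (Finset.univ \ S).card := by
      rw [hcardSc]; omega
    obtain ⟨T₀, hT₀sub, hT₀card, hT₀min⟩ := exists_min_subset q m (Finset.univ \ S) hmlen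
    have hT₀ne : T₀.Nonempty := Finset.card_pos.mp (by rw [hT₀card]; omega)
    obtain ⟨vmax, hvmaxT, hvmax⟩ := Finset.exists_max_image T₀ q hT₀ne
    have hT₀α : α * n ≤ (T₀.card : ℝ) := by
      rw [hT₀card]
      linarith only [mul_le_mul_of_nonneg_right hα hn0R.le, hm78]
    have hT₀sum : c₁ * m * p n * S.card ≤ ∑ v ∈ T₀, q v := by
      have := (hqsum T₀ hT₀sub (by rw [hT₀card] at hT₀α ⊢; exact_mod_cast hT₀α)).1
      rw [hT₀card] at this
      exact this
    have hsplitsum := Finset.sum_sdiff hT₀sub (f := fun v => (μ (A v)).toReal)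
    have hocn : ((Finset.univ \ S) \ T₀).card = n/8 - S.card := by
      rw [Finset.card_sdiff_of_subset hT₀sub, hT₀card, hcardSc]; omega
    have hocR : ((n:ℝ) - 7)/8 - S.card ≤ ((((Finset.univ \ S) \ T₀).card : ℕ):ℝ) := by
      rw [hocn, Nat.cast_sub (by omega : S.card ≤ n/8)]
      linarith
    have hocnn : (0:ℝ) ≤ ((((Finset.univ \ S) \ T₀).card : ℕ):ℝ) := Nat.cast_nonneg _
    have hlow : ∀ v ∈ Finset.univ \ S, 1 - Real.exp (-(q v)) ≤ (μ (A v)).toReal :=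
      fun v hv => (hPB v (hSsub v hv)).2.1
    have hcmn : c₁ * (7/8 * (n:ℝ)) * p n * S.card ≤ c₁ * m * p n * S.card := by
      nlinarith only [hm78, mul_nonneg (mul_nonneg hc₁.le hP.le) hscard0]
    have hcn10 : c₁ * p n * S.card * n ≤ n/10 :=  by
      linarith only [mul_le_mul_of_nonneg_right hc1ps hn0R.le]
    by_cases hτ : q vmax ≤ 1/4
    · -- Case A : all small
      have hpt : ∀ v ∈ T₀, (6/7:ℝ) * q v ≤ (μ (A v)).toReal := by
        intro v hv
        have h1 : q v * (1 - Real.exp (-(1/4))) ≤ (1/4) * (1 - Real.exp (-(q v))) :=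
          exp_conv (hq0 v) ((hvmax v hv).trans hτ) (by norm_num)
        have h2 := hlow v (hT₀sub hv)
        linarith only [h1, h2, mul_le_mul_of_nonneg_left hexp4 (hq0 v)]
      have hsumT : (6/7:ℝ) * ∑ v ∈ T₀, q v ≤ ∑ v ∈ T₀, (μ (A v)).toReal := by
        rw [Finset.mul_sum]; exact Finset.sum_le_sum hpt
      have hrest : (0:ℝ) ≤ ∑ v ∈ (Finset.univ \ S) \ T₀, (μ (A v)).toReal :=
        Finset.sum_nonneg fun v _ => htr0 v
      linarith only [hsplitsum, hT₀sum, hsumT, hcmn, hrest]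
    · -- Case B : q vmax > 1/4
      push_neg at hτ
      have hout : ∀ v ∈ (Finset.univ \ S) \ T₀,
          1 - Real.exp (-(q vmax)) ≤ (μ (A v)).toReal := by
        intro v hv
        have hqv : q vmax ≤ q v := hT₀min vmax hvmaxT v hv
        have := hlow v (Finset.mem_sdiff.mp hv).1
        have hmono : Real.exp (-(q v)) ≤ Real.exp (-(q vmax)) :=
          Real.exp_le_exp.mpr (by linarith only [hqv])
        linarith only [this, hmono]
      have houtsum : (((((Finset.univ \ S) \ T₀).card : ℕ)):ℝ) * (1 - Real.exp (-(q vmax)))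
          ≤ ∑ v ∈ (Finset.univ \ S) \ T₀, (μ (A v)).toReal := by
        have := Finset.card_nsmul_le_sum ((Finset.univ \ S) \ T₀)
          (fun v => (μ (A v)).toReal) (1 - Real.exp (-(q vmax))) hout
        rwa [nsmul_eq_mul] at this
      by_cases hτ1 : q vmax ≤ 1
      · -- B1
        have hpt : ∀ v ∈ T₀, (79/125:ℝ) * q v ≤ (μ (A v)).toReal := by
          intro v hv
          have h1 : q v * (1 - Real.exp (-(1:ℝ))) ≤ 1 * (1 - Real.exp (-(q v))) :=
            exp_conv (hq0 v) ((hvmax v hv).trans hτ1) one_pos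
          have h2 := hlow v (hT₀sub hv)
          linarith only [h1, h2, mul_le_mul_of_nonneg_left hexp1 (hq0 v)]
        have hsumT : (79/125:ℝ) * ∑ v ∈ T₀, q v ≤ ∑ v ∈ T₀, (μ (A v)).toReal := by
          rw [Finset.mul_sum]; exact Finset.sum_le_sum hpt
        have hτ4 : Real.exp (-(q vmax)) ≤ 11/14 :=
          le_trans (Real.exp_le_exp.mpr (by linarith)) hexp4
        have houts : ((((Finset.univ \ S) \ T₀).card : ℕ):ℝ) * (3/14)
            ≤ ∑ v ∈ (Finset.univ \ S) \ T₀, (μ (A v)).toReal := by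
          refine le_trans ?_ houtsum
          nlinarith only [hτ4, hocnn]
        linarith only [hsplitsum, hT₀sum, hsumT, hcmn, houts, hocR, hcn10, hs200]
      · -- B2
        push_neg at hτ1
        have hrest : (0:ℝ) ≤ ∑ v ∈ T₀, (μ (A v)).toReal :=
          Finset.sum_nonneg fun v _ => htr0 v
        have hτ4 : Real.exp (-(q vmax)) ≤ 46/125 :=
          le_trans (Real.exp_le_exp.mpr (by linarith)) hexp1
        have houts : ((((Finset.univ \ S) \ T₀).card : ℕ):ℝ) * (79/125)
            ≤ ∑ v ∈ (Finset.univ \ S) \ T₀, (μ (A v)).toReal := by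
          refine le_trans ?_ houtsum
          nlinarith only [hτ4, hocnn]
        linarith only [hsplitsum, hrest, houts, hocR, hcn10, hs200]
  · -- upper bound
    have h1 : ∑ v ∈ Finset.univ \ S, (μ (A v)).toReal ≤ ∑ v ∈ Finset.univ \ S, q v :=
      Finset.sum_le_sum fun v hv => (hPB v (hSsub v hv)).2.2
    have h2 := (hqsum (Finset.univ \ S) (subset_refl _) hαSc).2
    have h3 : c₂ * ((Finset.univ \ S).card : ℝ) * p n * S.card ≤ c₂ * n * p n * S.card := by
      rw [hcardScR]
      nlinarith [mul_nonneg (mul_nonneg hc₂.le hP.le) hscard0]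
    linarith
end
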